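/- arXiv:1910.13932 — 11 statements merged into one kernel-verified Lean document; each statement's English description precedes it below -/
import Mathlib

section
/- For every real a > 0 and every real x with 0 < x ≤ π/2, one has (1 − e^{−2·a·x}) − 2·a·(sin x)·e^{−a·x} > 0. -/
/-- For every real `a > 0` and every real `x` with `0 < x ≤ π/2`,
`(1 − e^{−2ax}) − 2a (sin x) e^{−ax} > 0`. -/
theorem stmt_1 (a x : ℝ) (ha : 0 < a) (hx : 0 < x) (hx' : x ≤ Real.pi / 2) :
    0 < (1 - Real.exp (-2 * a * x)) - 2 * a * Real.sin x * Real.exp (-a * x) := by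
  have ht : 0 < a * x := mul_pos ha hx
  have hsin : Real.sin x < x := Real.sin_lt hx
  have hexp : 0 < Real.exp (-a * x) := Real.exp_pos _
  have h1 : 2 * a * Real.sin x * Real.exp (-a * x)
      < 2 * (a * x) * Real.exp (-a * x) := by
    apply mul_lt_mul_of_pos_right _ hexp
    nlinarith
  have hsinh : a * x < Real.sinh (a * x) := Real.self_lt_sinh_iff.mpr ht
  rw [Real.sinh_eq] at hsinh
  have h2 : 2 * (a * x) * Real.exp (-a * x)
      < (Real.exp (a * x) - Real.exp (-(a * x))) * Real.exp (-a * x) := by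
    apply mul_lt_mul_of_pos_right _ hexp
    linarith
  have h3 : (Real.exp (a * x) - Real.exp (-(a * x))) * Real.exp (-a * x)
      = 1 - Real.exp (-2 * a * x) := by
    have e1 : Real.exp (a * x) * Real.exp (-a * x) = 1 := by
      rw [← Real.exp_add]; ring_nf; exact Real.exp_zero
    have e2 : Real.exp (-(a * x)) * Real.exp (-a * x) = Real.exp (-2 * a * x) := by
      rw [← Real.exp_add]; ring_nf
    nlinarith [e1, e2]
  linarith
end

section
/- Let 0 < k1 < k2 and let a, b > 0 be real. Then for every ξ ∈ ℂ with Re ξ · Im ξ ≤ 0 and for each j ∈ {1,2}: |μ₁(ξ) + μ₂(ξ)| · |exp(i·μ_j(ξ)·(a + i·b)) − 1| ≤ (4 + 2·√(k2² − k1²)·|a + i·b|) · |μ_j(ξ)|. -/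
/-- `w` is the principal square root of `z`: `w² = z` and either `Re w > 0`, or
`Re w = 0` and `Im w ≥ 0`. -/
def IsPrincipalSqrt (z w : ℂ) : Prop :=
  w ^ 2 = z ∧ (0 < w.re ∨ (w.re = 0 ∧ 0 ≤ w.im))

lemma quadrant_of_sqrt {z w : ℂ} (h : IsPrincipalSqrt z w) (him : 0 ≤ z.im) :
    0 ≤ w.re ∧ 0 ≤ w.im := by
  obtain ⟨hsq, hre⟩ := h
  rcases hre with h | ⟨h0, h1⟩
  · refine ⟨h.le, ?_⟩
    have : z.im = 2 * w.re * w.im := by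
      rw [← hsq]; simp [pow_two, Complex.mul_im]; ring
    nlinarith [this ▸ him]
  · exact ⟨h0.ge, h1⟩

/-- Let `0 < k1 < k2` and `a, b > 0`. For every `ξ ∈ ℂ` with
`Re ξ · Im ξ ≤ 0` and each `j ∈ {1,2}`,
`|μ₁(ξ) + μ₂(ξ)| · |exp(i μ_j(ξ) (a + i b)) − 1| ≤ (4 + 2 √(k2² − k1²) |a + i b|) · |μ_j(ξ)|`. -/
theorem stmt_3 (k1 k2 a b : ℝ) (hk1 : 0 < k1) (hk12 : k1 < k2) (ha : 0 < a) (hb : 0 < b)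
    (μ₁ μ₂ : ℂ → ℂ)
    (hμ₁ : ∀ ξ : ℂ, IsPrincipalSqrt ((k1 : ℂ) ^ 2 - ξ ^ 2) (μ₁ ξ))
    (hμ₂ : ∀ ξ : ℂ, IsPrincipalSqrt ((k2 : ℂ) ^ 2 - ξ ^ 2) (μ₂ ξ))
    (ξ : ℂ) (hξ : ξ.re * ξ.im ≤ 0) :
    ∀ μ ∈ ({μ₁ ξ, μ₂ ξ} : Set ℂ),
      ‖μ₁ ξ + μ₂ ξ‖ *
          ‖Complex.exp (Complex.I * μ * ((a : ℂ) + Complex.I * (b : ℂ))) - 1‖ ≤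
        (4 + 2 * Real.sqrt (k2 ^ 2 - k1 ^ 2) * ‖(a : ℂ) + Complex.I * (b : ℂ)‖) *
          ‖μ‖ := by
  intro μ hμ
  set z : ℂ := (a : ℂ) + Complex.I * (b : ℂ) with hzdef
  -- quadrant facts
  have him1 : 0 ≤ ((k1 : ℂ) ^ 2 - ξ ^ 2).im := by
    simp [pow_two, Complex.sub_im, Complex.mul_im]
    nlinarith
  have him2 : 0 ≤ ((k2 : ℂ) ^ 2 - ξ ^ 2).im := by
    simp [pow_two, Complex.sub_im, Complex.mul_im]
    nlinarith
  obtain ⟨h1re, h1im⟩ := quadrant_of_sqrt (hμ₁ ξ) him1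
  obtain ⟨h2re, h2im⟩ := quadrant_of_sqrt (hμ₂ ξ) him2
  have hμre : 0 ≤ μ.re ∧ 0 ≤ μ.im := by
    rcases hμ with h | h <;> rw [h] <;> exact ⟨by assumption, by assumption⟩
  -- difference bound : |μ₂ - μ₁| ≤ √(k2²-k1²)
  have hc : (0:ℝ) < k2 ^ 2 - k1 ^ 2 := by nlinarith
  have hprod : (μ₂ ξ - μ₁ ξ) * (μ₂ ξ + μ₁ ξ) = ((k2 ^ 2 - k1 ^ 2 : ℝ) : ℂ) := by
    have e1 := (hμ₁ ξ).1
    have e2 := (hμ₂ ξ).1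
    push_cast
    ring_nf
    ring_nf at e1 e2
    rw [e1, e2]
    ring
  have habsprod : ‖μ₂ ξ - μ₁ ξ‖ * ‖μ₂ ξ + μ₁ ξ‖
      = k2 ^ 2 - k1 ^ 2 := by
    rw [← norm_mul, hprod, Complex.norm_real, Real.norm_of_nonneg hc.le]
  have hle : ‖μ₂ ξ - μ₁ ξ‖ ≤ ‖μ₂ ξ + μ₁ ξ‖ := by
    have hsq : ‖μ₂ ξ - μ₁ ξ‖ ^ 2 ≤ ‖μ₂ ξ + μ₁ ξ‖ ^ 2 := by
      rw [Complex.sq_norm, Complex.sq_norm, Complex.normSq_apply, Complex.normSq_apply]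
      simp only [Complex.sub_re, Complex.sub_im, Complex.add_re, Complex.add_im]
      nlinarith
    nlinarith [norm_nonneg (μ₂ ξ - μ₁ ξ), norm_nonneg (μ₂ ξ + μ₁ ξ)]
  have hdiff : ‖μ₂ ξ - μ₁ ξ‖ ≤ Real.sqrt (k2 ^ 2 - k1 ^ 2) := by
    rw [show (k2:ℝ) ^ 2 - k1 ^ 2 = ‖μ₂ ξ - μ₁ ξ‖ * ‖μ₂ ξ + μ₁ ξ‖ from habsprod.symm]
    have h1 : ‖μ₂ ξ - μ₁ ξ‖ ^ 2 ≤ ‖μ₂ ξ - μ₁ ξ‖ * ‖μ₂ ξ + μ₁ ξ‖ := by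
      nlinarith [norm_nonneg (μ₂ ξ - μ₁ ξ)]
    calc ‖μ₂ ξ - μ₁ ξ‖ = Real.sqrt (‖μ₂ ξ - μ₁ ξ‖ ^ 2) := by
          rw [Real.sqrt_sq (norm_nonneg _)]
      _ ≤ _ := Real.sqrt_le_sqrt h1
  -- exponential bounds
  set w : ℂ := Complex.I * μ * z with hwdef
  have hwre : w.re ≤ 0 := by
    simp [hwdef, hzdef, Complex.mul_re, Complex.mul_im]
    nlinarith [hμre.1, hμre.2]
  have hE2 : ‖Complex.exp w - 1‖ ≤ 2 := by
    calc ‖Complex.exp w - 1‖ ≤ ‖Complex.exp w‖ + 1 := by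
          simpa using norm_sub_le (Complex.exp w) 1
      _ ≤ 2 := by
        rw [Complex.norm_exp]
        have := Real.exp_le_one_iff.mpr hwre
        linarith
  have hwabs : ‖w‖ = ‖μ‖ * ‖z‖ := by
    simp [hwdef, map_mul]
  have hEw : ‖Complex.exp w - 1‖ ≤ 2 * ‖w‖ := by
    rcases le_or_gt (‖w‖) 1 with h | h
    · exact Complex.norm_exp_sub_one_le h
    · linarith
  -- triangle: |μ₁+μ₂| ≤ 2|μ| + |μ₂-μ₁|
  have htri : ‖μ₁ ξ + μ₂ ξ‖ ≤ 2 * ‖μ‖ + ‖μ₂ ξ - μ₁ ξ‖ := by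
    rcases hμ with h | h
    · rw [h]
      calc ‖μ₁ ξ + μ₂ ξ‖ = ‖2 * μ₁ ξ + (μ₂ ξ - μ₁ ξ)‖ := by ring_nf
        _ ≤ ‖2 * μ₁ ξ‖ + ‖μ₂ ξ - μ₁ ξ‖ := norm_add_le _ _
        _ = 2 * ‖μ₁ ξ‖ + ‖μ₂ ξ - μ₁ ξ‖ := by simp [map_mul]
    · rw [h]
      calc ‖μ₁ ξ + μ₂ ξ‖ = ‖2 * μ₂ ξ - (μ₂ ξ - μ₁ ξ)‖ := by ring_nf
        _ ≤ ‖2 * μ₂ ξ‖ + ‖μ₂ ξ - μ₁ ξ‖ := norm_sub_le _ _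
        _ = 2 * ‖μ₂ ξ‖ + ‖μ₂ ξ - μ₁ ξ‖ := by simp [map_mul]
  -- combine
  have h0μ : 0 ≤ ‖μ‖ := norm_nonneg _
  have h0z : 0 ≤ ‖z‖ := norm_nonneg _
  have h0E : 0 ≤ ‖Complex.exp w - 1‖ := norm_nonneg _
  have h0D : 0 ≤ ‖μ₂ ξ - μ₁ ξ‖ := norm_nonneg _
  have h0s : 0 ≤ Real.sqrt (k2 ^ 2 - k1 ^ 2) := Real.sqrt_nonneg _
  nlinarith [mul_le_mul_of_nonneg_right htri h0E,
    mul_le_mul_of_nonneg_left hE2 (mul_nonneg (by norm_num : (0:ℝ) ≤ 2) h0μ),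
    mul_le_mul_of_nonneg_left hEw h0D,
    mul_le_mul_of_nonneg_right hdiff (mul_nonneg (mul_nonneg (by norm_num : (0:ℝ) ≤ 2) h0μ) h0z),
    hwabs]
end

section
/- Let 0 < k1 < k2. Then for every ξ ∈ ℂ one has √(k2² − k1²) ≤ |μ₁(ξ) + μ₂(ξ)| (in particular μ₁(ξ) + μ₂(ξ) ≠ 0) and |μ₁(ξ) − μ₂(ξ)| ≤ √(k2² − k1²). -/
/-- Let `0 < k1 < k2`. For every `ξ ∈ ℂ`,
`√(k2² − k1²) ≤ |μ₁(ξ) + μ₂(ξ)|` (in particular `μ₁(ξ) + μ₂(ξ) ≠ 0`) and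
`|μ₁(ξ) − μ₂(ξ)| ≤ √(k2² − k1²)`. -/
theorem stmt_4 (k1 k2 : ℝ) (hk1 : 0 < k1) (hk12 : k1 < k2)
    (μ₁ μ₂ : ℂ → ℂ)
    (hμ₁ : ∀ ξ : ℂ, IsPrincipalSqrt ((k1 : ℂ) ^ 2 - ξ ^ 2) (μ₁ ξ))
    (hμ₂ : ∀ ξ : ℂ, IsPrincipalSqrt ((k2 : ℂ) ^ 2 - ξ ^ 2) (μ₂ ξ))
    (ξ : ℂ) :
    Real.sqrt (k2 ^ 2 - k1 ^ 2) ≤ ‖μ₁ ξ + μ₂ ξ‖ ∧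
    μ₁ ξ + μ₂ ξ ≠ 0 ∧
    ‖μ₁ ξ - μ₂ ξ‖ ≤ Real.sqrt (k2 ^ 2 - k1 ^ 2) := by
  obtain ⟨ha2, hare⟩ := hμ₁ ξ
  obtain ⟨hb2, hbre⟩ := hμ₂ ξ
  set a := μ₁ ξ with ha
  set b := μ₂ ξ with hb
  have hc : (0:ℝ) < k2 ^ 2 - k1 ^ 2 := by nlinarith
  have hdiff : b ^ 2 - a ^ 2 = ((k2 ^ 2 - k1 ^ 2 : ℝ) : ℂ) := by
    rw [ha2, hb2]; push_cast; ring
  have him : (a ^ 2).im = (b ^ 2).im := by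
    have h := congrArg Complex.im hdiff
    rw [Complex.sub_im, Complex.ofReal_im] at h
    linarith
  have hpq : a.re * a.im = b.re * b.im := by
    have h := him
    simp [pow_two, Complex.mul_im] at h
    linarith
  have key : 0 ≤ a.re * b.re + a.im * b.im := by
    rcases hare with hA | ⟨hA, hA'⟩ <;> rcases hbre with hB | ⟨hB, hB'⟩
    · have h4 : a.im * b.im * (a.re * b.re) = (a.re * a.im) * (b.re * b.im) := by
        ring
      rw [← hpq] at h4
      nlinarith [mul_pos hA hB, sq_nonneg (a.re * a.im), h4]
    · have hq : a.im = 0 := by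
        have h := hpq
        rw [hB, zero_mul] at h
        exact (mul_eq_zero.mp h).resolve_left (ne_of_gt hA)
      simp [hB, hq]
    · have hs : b.im = 0 := by
        have h := hpq
        rw [hA, zero_mul] at h
        exact (mul_eq_zero.mp h.symm).resolve_left (ne_of_gt hB)
      simp [hA, hs]
    · simp only [hA, zero_mul, zero_add]
      exact mul_nonneg hA' hB'
  have hDS : ‖a - b‖ ≤ ‖a + b‖ := by
    have h : Complex.normSq (a - b) ≤ Complex.normSq (a + b) := by
      simp only [Complex.normSq_apply, Complex.add_re, Complex.add_im,
        Complex.sub_re, Complex.sub_im]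
      nlinarith
    rw [Complex.norm_def, Complex.norm_def]
    exact Real.sqrt_le_sqrt h
  have hprod : ‖a + b‖ * ‖a - b‖ = k2 ^ 2 - k1 ^ 2 := by
    rw [← norm_mul]
    have : (a + b) * (a - b) = -((k2 ^ 2 - k1 ^ 2 : ℝ) : ℂ) := by
      rw [← hdiff]; ring
    rw [this, norm_neg, Complex.norm_real, Real.norm_eq_abs, abs_of_pos hc]
  have hS0 : 0 ≤ ‖a + b‖ := norm_nonneg _
  have hD0 : 0 ≤ ‖a - b‖ := norm_nonneg _
  have hne : a + b ≠ 0 := by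
    intro h
    rw [h, norm_zero, zero_mul] at hprod
    linarith
  refine ⟨?_, hne, ?_⟩
  · have h1 : k2 ^ 2 - k1 ^ 2 ≤ ‖a + b‖ ^ 2 := by
      rw [← hprod]; nlinarith
    calc Real.sqrt (k2 ^ 2 - k1 ^ 2) ≤ Real.sqrt (‖a + b‖ ^ 2) :=
          Real.sqrt_le_sqrt h1
      _ = ‖a + b‖ := Real.sqrt_sq hS0
  · have h1 : ‖a - b‖ ^ 2 ≤ k2 ^ 2 - k1 ^ 2 := by
      rw [← hprod]; nlinarith
    calc ‖a - b‖ = Real.sqrt (‖a - b‖ ^ 2) :=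
          (Real.sqrt_sq hD0).symm
      _ ≤ Real.sqrt (k2 ^ 2 - k1 ^ 2) := Real.sqrt_le_sqrt h1
end

section
/- Let 0 < k1 < k2, M2 > 0 and σ̄2 > 0. Then: (i) for every real ξ, A(ξ) = 0 if and only if ξ ∈ {k1, −k1, k2, −k2}; (ii) for every purely imaginary ξ (i.e. ξ = i·t with t ∈ ℝ), A(ξ) ≠ 0. -/
/-- `-t ≤ sin t` for `0 ≤ t`. -/
lemma stmt5_neg_le_sin {t : ℝ} (ht : 0 ≤ t) : -t ≤ Real.sin t := by
  rcases le_or_gt t 1 with h | h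
  · have : 0 ≤ Real.sin t := Real.sin_nonneg_of_nonneg_of_le_pi ht (by nlinarith [Real.pi_gt_three])
    linarith
  · have := Real.neg_one_le_sin t
    linarith

lemma stmt5_keypos {x y r : ℝ} (hx : 0 < x) (hy : 0 < y) (hr : 0 < r) :
    0 < x * Real.sinh (2 * (r * y)) + y * Real.sin (2 * (r * x)) := by
  have h1 : 2 * (r * y) < Real.sinh (2 * (r * y)) :=
    (Real.self_lt_sinh_iff).2 (by positivity)
  have h2 : -(2 * (r * x)) ≤ Real.sin (2 * (r * x)) := stmt5_neg_le_sin (by positivity)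
  nlinarith

lemma stmt5_prod_cos_sin (w : ℂ) :
    Complex.cos w * (starRingEnd ℂ) (Complex.sin w) =
      (((Real.sin (2 * w.re) : ℝ) : ℂ) - ((Real.sinh (2 * w.im) : ℝ) : ℂ) * Complex.I) / 2 := by
  rw [← Complex.sin_conj]
  have key : Complex.sin ((starRingEnd ℂ) w + w) + Complex.sin ((starRingEnd ℂ) w - w)
      = 2 * Complex.cos w * Complex.sin ((starRingEnd ℂ) w) := by
    rw [Complex.sin_add, Complex.sin_sub]; ring
  have h2 : (starRingEnd ℂ) w + w = (((2 * w.re : ℝ)) : ℂ) := by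
    rw [add_comm]; exact Complex.add_conj w
  have h3 : (starRingEnd ℂ) w - w = -(((2 * w.im : ℝ) : ℂ) * Complex.I) := by
    have := Complex.sub_conj w
    linear_combination -this
  rw [h2, h3, Complex.sin_neg, Complex.sin_mul_I] at key
  have h4 : Complex.sin (((2 * w.re : ℝ)) : ℂ) = ((Real.sin (2 * w.re) : ℝ) : ℂ) :=
    (Complex.ofReal_sin _).symm
  have h5 : Complex.sinh (((2 * w.im : ℝ)) : ℂ) = ((Real.sinh (2 * w.im) : ℝ) : ℂ) :=
    (Complex.ofReal_sinh _).symm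
  rw [h4, h5] at key
  linear_combination -key / 2

lemma stmt5_prod_cosh_sinh (w : ℂ) :
    Complex.cosh w * (starRingEnd ℂ) (Complex.sinh w) =
      (((Real.sinh (2 * w.re) : ℝ) : ℂ) - ((Real.sin (2 * w.im) : ℝ) : ℂ) * Complex.I) / 2 := by
  rw [← Complex.sinh_conj]
  have key : Complex.sinh ((starRingEnd ℂ) w + w) + Complex.sinh ((starRingEnd ℂ) w - w)
      = 2 * Complex.cosh w * Complex.sinh ((starRingEnd ℂ) w) := by
    rw [Complex.sinh_add, Complex.sinh_sub]; ring
  have h2 : (starRingEnd ℂ) w + w = (((2 * w.re : ℝ)) : ℂ) := by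
    rw [add_comm]; exact Complex.add_conj w
  have h3 : (starRingEnd ℂ) w - w = -(((2 * w.im : ℝ) : ℂ) * Complex.I) := by
    have := Complex.sub_conj w
    linear_combination -this
  rw [h2, h3, Complex.sinh_neg, Complex.sinh_mul_I] at key
  have h4 : Complex.sinh (((2 * w.re : ℝ)) : ℂ) = ((Real.sinh (2 * w.re) : ℝ) : ℂ) :=
    (Complex.ofReal_sinh _).symm
  have h5 : Complex.sin (((2 * w.im : ℝ)) : ℂ) = ((Real.sin (2 * w.im) : ℝ) : ℂ) :=
    (Complex.ofReal_sin _).symm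
  rw [h4, h5] at key
  linear_combination -key / 2

lemma stmt5_sin_ne_zero_of_im_pos {w : ℂ} (h : 0 < w.im) : Complex.sin w ≠ 0 := by
  intro hs
  rw [Complex.sin_eq_zero_iff] at hs
  obtain ⟨k, hk⟩ := hs
  have h2 := congrArg Complex.im hk
  simp at h2
  linarith [h2 ▸ h]

lemma stmt5_neg_im (z μ : ℂ) (hx : 0 < z.re) (hy : 0 < z.im)
    (hμ : (∃ r : ℝ, 0 < r ∧ μ = (r : ℂ)) ∨ (∃ r : ℝ, 0 < r ∧ μ = (r : ℂ) * Complex.I)) :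
    Complex.sin (μ * z) ≠ 0 ∧
      ((starRingEnd ℂ) z * (μ * Complex.cos (μ * z) * (starRingEnd ℂ) (Complex.sin (μ * z)))).im
        < 0 := by
  obtain ⟨r, hr, rfl⟩ | ⟨r, hr, rfl⟩ := hμ
  · have him : ((r : ℂ) * z).im = r * z.im := by simp
    have hre : ((r : ℂ) * z).re = r * z.re := by simp
    refine ⟨stmt5_sin_ne_zero_of_im_pos (by rw [him]; positivity), ?_⟩
    have hp := stmt5_prod_cos_sin ((r : ℂ) * z)
    set X := (starRingEnd ℂ) z *
      ((r : ℂ) * Complex.cos ((r : ℂ) * z) * (starRingEnd ℂ) (Complex.sin ((r : ℂ) * z))) with hX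
    have h2X : (2 : ℂ) * X = (starRingEnd ℂ) z * ((r : ℂ) *
        (((Real.sin (2 * ((r : ℂ) * z).re) : ℝ) : ℂ)
          - ((Real.sinh (2 * ((r : ℂ) * z).im) : ℝ) : ℂ) * Complex.I)) := by
      rw [hX]
      linear_combination 2 * (starRingEnd ℂ) z * (r : ℂ) * hp
    have himX := congrArg Complex.im h2X
    rw [hre, him] at himX
    simp only [Complex.mul_im, Complex.mul_re, Complex.ofReal_re, Complex.ofReal_im,
      Complex.conj_re, Complex.conj_im, Complex.sub_re, Complex.sub_im, Complex.I_re,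
      Complex.I_im, mul_zero, zero_mul, mul_one, sub_zero, zero_sub, add_zero, zero_add,
      Complex.re_ofNat, Complex.im_ofNat] at himX
    have key := stmt5_keypos hx hy hr
    nlinarith [himX, key]
  · have hmz : (r : ℂ) * Complex.I * z = ((r : ℂ) * z) * Complex.I := by ring
    rw [hmz, Complex.sin_mul_I, Complex.cos_mul_I]
    have hure : ((r : ℂ) * z).re = r * z.re := by simp
    have huim : ((r : ℂ) * z).im = r * z.im := by simp
    have hsne : Complex.sinh ((r : ℂ) * z) ≠ 0 := by
      intro h0
      have : Complex.sin (((r : ℂ) * z) * Complex.I) ≠ 0 :=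
        stmt5_sin_ne_zero_of_im_pos (by simp [Complex.mul_im, hure, huim]; positivity)
      rw [Complex.sin_mul_I, h0, zero_mul] at this
      exact this rfl
    refine ⟨mul_ne_zero hsne Complex.I_ne_zero, ?_⟩
    have hp := stmt5_prod_cosh_sinh ((r : ℂ) * z)
    have hrw : (r : ℂ) * Complex.I * Complex.cosh ((r : ℂ) * z) *
        (starRingEnd ℂ) (Complex.sinh ((r : ℂ) * z) * Complex.I)
        = (r : ℂ) * (Complex.cosh ((r : ℂ) * z) *
            (starRingEnd ℂ) (Complex.sinh ((r : ℂ) * z))) := by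
      rw [map_mul, Complex.conj_I]
      linear_combination (-(r : ℂ)) * Complex.cosh ((r : ℂ) * z) *
        (starRingEnd ℂ) (Complex.sinh ((r : ℂ) * z)) * Complex.I_sq
    rw [hrw]
    set X := (starRingEnd ℂ) z * ((r : ℂ) *
      (Complex.cosh ((r : ℂ) * z) * (starRingEnd ℂ) (Complex.sinh ((r : ℂ) * z)))) with hX
    have h2X : (2 : ℂ) * X = (starRingEnd ℂ) z * ((r : ℂ) *
        (((Real.sinh (2 * ((r : ℂ) * z).re) : ℝ) : ℂ)
          - ((Real.sin (2 * ((r : ℂ) * z).im) : ℝ) : ℂ) * Complex.I)) := by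
      rw [hX]
      linear_combination 2 * (starRingEnd ℂ) z * (r : ℂ) * hp
    have himX := congrArg Complex.im h2X
    rw [hure, huim] at himX
    simp only [Complex.mul_im, Complex.mul_re, Complex.ofReal_re, Complex.ofReal_im,
      Complex.conj_re, Complex.conj_im, Complex.sub_re, Complex.sub_im, Complex.I_re,
      Complex.I_im, mul_zero, zero_mul, mul_one, sub_zero, zero_sub, add_zero, zero_add,
      Complex.re_ofNat, Complex.im_ofNat] at himX
    have key := stmt5_keypos hy hx hr
    nlinarith [himX, key]

lemma stmt5_G_ne (z μ₁ μ₂ : ℂ) (hx : 0 < z.re) (hy : 0 < z.im)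
    (h1 : (∃ r : ℝ, 0 < r ∧ μ₁ = (r : ℂ)) ∨ (∃ r : ℝ, 0 < r ∧ μ₁ = (r : ℂ) * Complex.I))
    (h2 : (∃ r : ℝ, 0 < r ∧ μ₂ = (r : ℂ)) ∨ (∃ r : ℝ, 0 < r ∧ μ₂ = (r : ℂ) * Complex.I)) :
    μ₁ * Complex.cos (μ₁ * z) * Complex.sin (μ₂ * z)
      + μ₂ * Complex.sin (μ₁ * z) * Complex.cos (μ₂ * z) ≠ 0 := by
  obtain ⟨hS1, hI1⟩ := stmt5_neg_im z μ₁ hx hy h1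
  obtain ⟨hS2, hI2⟩ := stmt5_neg_im z μ₂ hx hy h2
  intro hG
  have key : (starRingEnd ℂ) z * (μ₁ * Complex.cos (μ₁ * z) * (starRingEnd ℂ)
        (Complex.sin (μ₁ * z))) * (Complex.sin (μ₂ * z) * (starRingEnd ℂ) (Complex.sin (μ₂ * z)))
      + (starRingEnd ℂ) z * (μ₂ * Complex.cos (μ₂ * z) * (starRingEnd ℂ)
        (Complex.sin (μ₂ * z))) * (Complex.sin (μ₁ * z) * (starRingEnd ℂ) (Complex.sin (μ₁ * z)))
      = 0 := by
    linear_combination ((starRingEnd ℂ) z * (starRingEnd ℂ) (Complex.sin (μ₁ * z)) *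
      (starRingEnd ℂ) (Complex.sin (μ₂ * z))) * hG
  rw [Complex.mul_conj, Complex.mul_conj] at key
  set T1 := (starRingEnd ℂ) z * (μ₁ * Complex.cos (μ₁ * z) * (starRingEnd ℂ)
    (Complex.sin (μ₁ * z))) with hT1
  set T2 := (starRingEnd ℂ) z * (μ₂ * Complex.cos (μ₂ * z) * (starRingEnd ℂ)
    (Complex.sin (μ₂ * z))) with hT2
  have him := congrArg Complex.im key
  simp only [Complex.add_im, Complex.mul_im, Complex.ofReal_re, Complex.ofReal_im, mul_zero,
    add_zero, zero_add, Complex.zero_im] at him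
  have p1 := Complex.normSq_pos.mpr hS1
  have p2 := Complex.normSq_pos.mpr hS2
  nlinarith [him, hI1, hI2, p1, p2]

lemma stmt5_one_sub_exp_sq (w : ℂ) :
    1 - Complex.exp (w * Complex.I) ^ 2 =
      -2 * Complex.I * Complex.sin w * Complex.exp (w * Complex.I) := by
  rw [Complex.exp_mul_I]
  linear_combination (Complex.sin w) ^ 2 * Complex.I_sq - Complex.sin_sq_add_cos_sq w

lemma stmt5_one_add_exp_sq (w : ℂ) :
    1 + Complex.exp (w * Complex.I) ^ 2 =
      2 * Complex.cos w * Complex.exp (w * Complex.I) := by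
  rw [Complex.exp_mul_I]
  linear_combination (Complex.sin w) ^ 2 * Complex.I_sq - Complex.sin_sq_add_cos_sq w

lemma stmt5_factorA (μ₁ μ₂ z : ℂ) :
    (1 - Complex.exp (2 * Complex.I * μ₁ * z) * Complex.exp (2 * Complex.I * μ₂ * z)) * (μ₁ + μ₂)
      + (Complex.exp (2 * Complex.I * μ₁ * z) - Complex.exp (2 * Complex.I * μ₂ * z)) * (μ₁ - μ₂)
    = (-4) * Complex.I * (Complex.exp ((μ₁ * z) * Complex.I) * Complex.exp ((μ₂ * z) * Complex.I))
      * (μ₁ * Complex.cos (μ₁ * z) * Complex.sin (μ₂ * z)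
        + μ₂ * Complex.sin (μ₁ * z) * Complex.cos (μ₂ * z)) := by
  have e1 : Complex.exp (2 * Complex.I * μ₁ * z) = Complex.exp ((μ₁ * z) * Complex.I) ^ 2 := by
    rw [sq, ← Complex.exp_add]; ring_nf
  have e2 : Complex.exp (2 * Complex.I * μ₂ * z) = Complex.exp ((μ₂ * z) * Complex.I) ^ 2 := by
    rw [sq, ← Complex.exp_add]; ring_nf
  rw [e1, e2]
  have p1 := stmt5_one_sub_exp_sq (μ₁ * z)
  have q1 := stmt5_one_add_exp_sq (μ₁ * z)
  have p2 := stmt5_one_sub_exp_sq (μ₂ * z)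
  have q2 := stmt5_one_add_exp_sq (μ₂ * z)
  linear_combination μ₁ * ((1 + Complex.exp ((μ₁ * z) * Complex.I) ^ 2) * p2
      + (-2 * Complex.I * Complex.sin (μ₂ * z) * Complex.exp ((μ₂ * z) * Complex.I)) * q1)
    + μ₂ * ((1 - Complex.exp ((μ₁ * z) * Complex.I) ^ 2) * q2
      + (2 * Complex.cos (μ₂ * z) * Complex.exp ((μ₂ * z) * Complex.I)) * p1)

lemma stmt5_psqrt_pos {c : ℝ} {μ : ℂ} (hc : 0 < c) (h : IsPrincipalSqrt ((c : ℝ) : ℂ) μ) :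
    ∃ r : ℝ, 0 < r ∧ μ = (r : ℂ) := by
  obtain ⟨hsq, hpos⟩ := h
  have hre := congrArg Complex.re hsq
  have him := congrArg Complex.im hsq
  simp [pow_two, Complex.mul_re, Complex.mul_im] at hre him
  rcases hpos with hp | ⟨hp0, hq⟩
  · have hq0 : μ.im = 0 := by
      have hm : μ.re * μ.im = 0 := by linarith
      rcases mul_eq_zero.mp hm with h | h
      · exact absurd h (ne_of_gt hp)
      · exact h
    refine ⟨μ.re, hp, ?_⟩
    exact Complex.ext (by simp) (by simp [hq0])
  · exfalso
    rw [hp0] at hre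
    nlinarith

lemma stmt5_psqrt_neg {c : ℝ} {μ : ℂ} (hc : c < 0) (h : IsPrincipalSqrt ((c : ℝ) : ℂ) μ) :
    ∃ r : ℝ, 0 < r ∧ μ = (r : ℂ) * Complex.I := by
  obtain ⟨hsq, hpos⟩ := h
  have hre := congrArg Complex.re hsq
  have him := congrArg Complex.im hsq
  simp [pow_two, Complex.mul_re, Complex.mul_im] at hre him
  rcases hpos with hp | ⟨hp0, hq⟩
  · exfalso
    have hq0 : μ.im = 0 := by
      have hm : μ.re * μ.im = 0 := by linarith
      rcases mul_eq_zero.mp hm with h | h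
      · exact absurd h (ne_of_gt hp)
      · exact h
    rw [hq0] at hre
    nlinarith
  · have hqne : μ.im ≠ 0 := by
      intro h0
      rw [hp0, h0] at hre
      nlinarith
    refine ⟨μ.im, lt_of_le_of_ne hq (Ne.symm hqne), ?_⟩
    exact Complex.ext (by simp [hp0]) (by simp)

lemma stmt5_psqrt_zero {μ : ℂ} (h : IsPrincipalSqrt 0 μ) : μ = 0 :=
  pow_eq_zero_iff (n := 2) (by norm_num) |>.mp h.1

/-- Let `0 < k1 < k2`, `M2 > 0`, `σ̄2 > 0`. Then (i) for real `ξ`,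
`A(ξ) = 0` iff `ξ ∈ {k1, −k1, k2, −k2}`; (ii) `A(ξ) ≠ 0` for purely imaginary `ξ`. -/
theorem stmt_5 (k1 k2 M2 σ2 : ℝ) (hk1 : 0 < k1) (hk12 : k1 < k2) (hM2 : 0 < M2) (hσ2 : 0 < σ2)
    (μ₁ μ₂ ε₁ ε₂ A : ℂ → ℂ)
    (hμ₁ : ∀ ξ : ℂ, IsPrincipalSqrt ((k1 : ℂ) ^ 2 - ξ ^ 2) (μ₁ ξ))
    (hμ₂ : ∀ ξ : ℂ, IsPrincipalSqrt ((k2 : ℂ) ^ 2 - ξ ^ 2) (μ₂ ξ))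
    (hε₁ : ∀ ξ : ℂ, ε₁ ξ = Complex.exp (2 * Complex.I * μ₁ ξ * ((M2 : ℂ) + Complex.I * (σ2 : ℂ))))
    (hε₂ : ∀ ξ : ℂ, ε₂ ξ = Complex.exp (2 * Complex.I * μ₂ ξ * ((M2 : ℂ) + Complex.I * (σ2 : ℂ))))
    (hA : ∀ ξ : ℂ, A ξ =
      (1 - ε₁ ξ * ε₂ ξ) * (μ₁ ξ + μ₂ ξ) + (ε₁ ξ - ε₂ ξ) * (μ₁ ξ - μ₂ ξ)) :
    (∀ ξ : ℝ, A (ξ : ℂ) = 0 ↔ (ξ = k1 ∨ ξ = -k1 ∨ ξ = k2 ∨ ξ = -k2)) ∧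
    (∀ t : ℝ, A (Complex.I * (t : ℂ)) ≠ 0) := by
  set z : ℂ := (M2 : ℂ) + Complex.I * (σ2 : ℂ) with hz
  have hx : 0 < z.re := by simp [hz]; exact hM2
  have hy : 0 < z.im := by simp [hz]; exact hσ2
  have hAe : ∀ ξ : ℂ, A ξ = (-4) * Complex.I *
      (Complex.exp ((μ₁ ξ * z) * Complex.I) * Complex.exp ((μ₂ ξ * z) * Complex.I)) *
      (μ₁ ξ * Complex.cos (μ₁ ξ * z) * Complex.sin (μ₂ ξ * z)
        + μ₂ ξ * Complex.sin (μ₁ ξ * z) * Complex.cos (μ₂ ξ * z)) := by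
    intro ξ
    rw [hA ξ, hε₁ ξ, hε₂ ξ]
    exact stmt5_factorA (μ₁ ξ) (μ₂ ξ) z
  have hcne : ∀ ξ : ℂ, (-4 : ℂ) * Complex.I *
      (Complex.exp ((μ₁ ξ * z) * Complex.I) * Complex.exp ((μ₂ ξ * z) * Complex.I)) ≠ 0 := by
    intro ξ
    exact mul_ne_zero (mul_ne_zero (by norm_num) Complex.I_ne_zero)
      (mul_ne_zero (Complex.exp_ne_zero _) (Complex.exp_ne_zero _))
  have hAiff : ∀ ξ : ℂ, (A ξ = 0 ↔
      μ₁ ξ * Complex.cos (μ₁ ξ * z) * Complex.sin (μ₂ ξ * z)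
        + μ₂ ξ * Complex.sin (μ₁ ξ * z) * Complex.cos (μ₂ ξ * z) = 0) := by
    intro ξ
    rw [hAe ξ]
    constructor
    · intro h
      rcases mul_eq_zero.mp h with h' | h'
      · exact absurd h' (hcne ξ)
      · exact h'
    · intro h; rw [h, mul_zero]
  constructor
  · intro ξ
    constructor
    · intro hA0
      by_contra hcon
      push_neg at hcon
      obtain ⟨h1, h2, h3, h4⟩ := hcon
      have hc1 : k1 ^ 2 - ξ ^ 2 ≠ 0 := by
        intro h
        have hm : (k1 - ξ) * (k1 + ξ) = 0 := by linear_combination h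
        rcases mul_eq_zero.mp hm with h' | h'
        · exact h1 (by linarith)
        · exact h2 (by linarith)
      have hc2 : k2 ^ 2 - ξ ^ 2 ≠ 0 := by
        intro h
        have hm : (k2 - ξ) * (k2 + ξ) = 0 := by linear_combination h
        rcases mul_eq_zero.mp hm with h' | h'
        · exact h3 (by linarith)
        · exact h4 (by linarith)
      have cast1 : (k1 : ℂ) ^ 2 - ((ξ : ℝ) : ℂ) ^ 2 = ((k1 ^ 2 - ξ ^ 2 : ℝ) : ℂ) := by
        push_cast; ring
      have cast2 : (k2 : ℂ) ^ 2 - ((ξ : ℝ) : ℂ) ^ 2 = ((k2 ^ 2 - ξ ^ 2 : ℝ) : ℂ) := by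
        push_cast; ring
      have hp1 := hμ₁ ((ξ : ℝ) : ℂ); rw [cast1] at hp1
      have hp2 := hμ₂ ((ξ : ℝ) : ℂ); rw [cast2] at hp2
      have d1 : (∃ r : ℝ, 0 < r ∧ μ₁ ((ξ : ℝ) : ℂ) = (r : ℂ)) ∨
          (∃ r : ℝ, 0 < r ∧ μ₁ ((ξ : ℝ) : ℂ) = (r : ℂ) * Complex.I) := by
        rcases hc1.lt_or_gt with h | h
        · exact Or.inr (stmt5_psqrt_neg h hp1)
        · exact Or.inl (stmt5_psqrt_pos h hp1)
      have d2 : (∃ r : ℝ, 0 < r ∧ μ₂ ((ξ : ℝ) : ℂ) = (r : ℂ)) ∨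
          (∃ r : ℝ, 0 < r ∧ μ₂ ((ξ : ℝ) : ℂ) = (r : ℂ) * Complex.I) := by
        rcases hc2.lt_or_gt with h | h
        · exact Or.inr (stmt5_psqrt_neg h hp2)
        · exact Or.inl (stmt5_psqrt_pos h hp2)
      exact stmt5_G_ne z _ _ hx hy d1 d2 ((hAiff _).mp hA0)
    · intro hmem
      have hzero : ∀ w : ℂ, (μ₁ w = 0 ∨ μ₂ w = 0) → A w = 0 := by
        intro w hw
        rw [hAiff w]
        rcases hw with h | h <;> rw [h] <;> simp
      rcases hmem with h | h | h | h <;> rw [h]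
      · refine hzero _ (Or.inl ?_)
        have h := hμ₁ ((k1 : ℝ) : ℂ)
        rw [sub_self] at h
        exact stmt5_psqrt_zero h
      · refine hzero _ (Or.inl ?_)
        have h := hμ₁ (((-k1 : ℝ)) : ℂ)
        rw [show (k1 : ℂ) ^ 2 - (((-k1 : ℝ)) : ℂ) ^ 2 = 0 by push_cast; ring] at h
        exact stmt5_psqrt_zero h
      · refine hzero _ (Or.inr ?_)
        have h := hμ₂ ((k2 : ℝ) : ℂ)
        rw [sub_self] at h
        exact stmt5_psqrt_zero h
      · refine hzero _ (Or.inr ?_)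
        have h := hμ₂ (((-k2 : ℝ)) : ℂ)
        rw [show (k2 : ℂ) ^ 2 - (((-k2 : ℝ)) : ℂ) ^ 2 = 0 by push_cast; ring] at h
        exact stmt5_psqrt_zero h
  · intro t
    have cast1 : (k1 : ℂ) ^ 2 - (Complex.I * (t : ℂ)) ^ 2 = ((k1 ^ 2 + t ^ 2 : ℝ) : ℂ) := by
      push_cast
      linear_combination (-(t : ℂ) ^ 2) * Complex.I_sq
    have cast2 : (k2 : ℂ) ^ 2 - (Complex.I * (t : ℂ)) ^ 2 = ((k2 ^ 2 + t ^ 2 : ℝ) : ℂ) := by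
      push_cast
      linear_combination (-(t : ℂ) ^ 2) * Complex.I_sq
    have hp1 := hμ₁ (Complex.I * (t : ℂ)); rw [cast1] at hp1
    have hp2 := hμ₂ (Complex.I * (t : ℂ)); rw [cast2] at hp2
    have d1 := stmt5_psqrt_pos (by nlinarith [sq_nonneg t]) hp1
    have d2 := stmt5_psqrt_pos (by nlinarith [sq_nonneg t]) hp2
    intro hA0
    exact stmt5_G_ne z _ _ hx hy (Or.inl d1) (Or.inl d2) ((hAiff _).mp hA0)
end

section
/- Let 0 < k1 < k2, M2 > 0 and σ̄2 > 0. Then A(ξ) ≠ 0 for every ξ ∈ ℂ with Re ξ · Im ξ < 0 (i.e. for every ξ in the open second quadrant {Re ξ < 0, Im ξ > 0} or the open fourth quadrant {Re ξ > 0, Im ξ < 0}). -/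
open Complex Real

noncomputable def Sfun (t : ℝ) : ℝ := if t = 0 then 1 else Real.sin t / t
noncomputable def Shfun (t : ℝ) : ℝ := if t = 0 then 1 else Real.sinh t / t

lemma mul_Sfun (t : ℝ) : t * Sfun t = Real.sin t := by
  unfold Sfun; split
  · simp [*]
  · field_simp

lemma mul_Shfun (t : ℝ) : t * Shfun t = Real.sinh t := by
  unfold Shfun; split
  · simp [*]
  · field_simp

lemma Sfun_neg (t : ℝ) : Sfun (-t) = Sfun t := by
  unfold Sfun
  rcases eq_or_ne t 0 with h | h
  · simp [h]
  · rw [if_neg (by simpa using h), if_neg h, Real.sin_neg, neg_div_neg_eq]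

lemma Shfun_neg (t : ℝ) : Shfun (-t) = Shfun t := by
  unfold Shfun
  rcases eq_or_ne t 0 with h | h
  · simp [h]
  · rw [if_neg (by simpa using h), if_neg h, Real.sinh_neg, neg_div_neg_eq]

lemma Sfun_le_one (t : ℝ) : Sfun t ≤ 1 := by
  have key : ∀ s : ℝ, 0 < s → Sfun s ≤ 1 := by
    intro s hs
    unfold Sfun
    rw [if_neg hs.ne']
    exact le_of_lt ((div_lt_one hs).2 (Real.sin_lt hs))
  rcases lt_trichotomy t 0 with h | h | h
  · rw [← Sfun_neg]; exact key _ (by linarith)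
  · simp [Sfun, h]
  · exact key _ h

lemma Sfun_lt_one {t : ℝ} (ht : t ≠ 0) : Sfun t < 1 := by
  have key : ∀ s : ℝ, 0 < s → Sfun s < 1 := by
    intro s hs
    unfold Sfun
    rw [if_neg hs.ne']
    exact (div_lt_one hs).2 (Real.sin_lt hs)
  rcases lt_trichotomy t 0 with h | h | h
  · rw [← Sfun_neg]; exact key _ (by linarith)
  · exact absurd h ht
  · exact key _ h

lemma neg_one_le_Sfun (t : ℝ) : -1 ≤ Sfun t := by
  have key : ∀ s : ℝ, 0 < s → -1 ≤ Sfun s := by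
    intro s hs
    unfold Sfun
    rw [if_neg hs.ne']
    rw [le_div_iff₀ hs]
    rcases le_or_gt s Real.pi with h | h
    · nlinarith [Real.sin_nonneg_of_nonneg_of_le_pi hs.le h]
    · have := Real.neg_one_le_sin s
      nlinarith [Real.pi_gt_three]
  rcases lt_trichotomy t 0 with h | h | h
  · rw [← Sfun_neg]; exact key _ (by linarith)
  · simp [Sfun, h]
  · exact key _ h

lemma one_le_Shfun (t : ℝ) : 1 ≤ Shfun t := by
  have key : ∀ s : ℝ, 0 < s → 1 ≤ Shfun s := by
    intro s hs
    unfold Shfun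
    rw [if_neg hs.ne', le_div_iff₀ hs, one_mul]
    exact (Real.self_le_sinh_iff.2 hs.le)
  rcases lt_trichotomy t 0 with h | h | h
  · rw [← Shfun_neg]; exact key _ (by linarith)
  · simp [Shfun, h]
  · exact key _ h

lemma one_lt_Shfun {t : ℝ} (ht : t ≠ 0) : 1 < Shfun t := by
  have key : ∀ s : ℝ, 0 < s → 1 < Shfun s := by
    intro s hs
    unfold Shfun
    rw [if_neg hs.ne', lt_div_iff₀ hs, one_mul]
    exact (Real.self_lt_sinh_iff.2 hs)
  rcases lt_trichotomy t 0 with h | h | h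
  · rw [← Shfun_neg]; exact key _ (by linarith)
  · exact absurd h ht
  · exact key _ h

noncomputable def qz (z : ℂ) : ℝ := (Shfun (2*z.im) - Sfun (2*z.re)) / 2
noncomputable def pz (z : ℂ) : ℝ := Complex.normSq z * (Sfun (2*z.re) + Shfun (2*z.im)) / 2

lemma qz_nonneg (z : ℂ) : 0 ≤ qz z := by
  unfold qz
  have := Sfun_le_one (2*z.re)
  have := one_le_Shfun (2*z.im)
  linarith

lemma qz_pos {z : ℂ} (hz : z ≠ 0) : 0 < qz z := by
  unfold qz
  rcases eq_or_ne z.im 0 with h | h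
  · have hre : z.re ≠ 0 := by
      intro h2; exact hz (Complex.ext h2 h)
    have h1 : Sfun (2*z.re) < 1 := Sfun_lt_one (by simpa using hre)
    have h2 : (1:ℝ) ≤ Shfun (2*z.im) := one_le_Shfun _
    linarith
  · have h1 : Sfun (2*z.re) ≤ 1 := Sfun_le_one _
    have h2 : (1:ℝ) < Shfun (2*z.im) := one_lt_Shfun (by simpa using h)
    linarith

lemma pz_nonneg (z : ℂ) : 0 ≤ pz z := by
  unfold pz
  have h1 := neg_one_le_Sfun (2*z.re)
  have h2 := one_le_Shfun (2*z.im)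
  have h3 := Complex.normSq_nonneg z
  nlinarith

lemma keyId (z : ℂ) : z * Complex.cos z * (starRingEnd ℂ) (Complex.sin z)
    = ((pz z : ℝ) : ℂ) - z^2 * ((qz z : ℝ) : ℂ) := by
  obtain ⟨x, y⟩ := z
  have hx' : ((2*x : ℝ) : ℂ) * ((Sfun (2*x) : ℝ) : ℂ) = ((Real.sin (2*x) : ℝ) : ℂ) := by
    exact_mod_cast congrArg (Complex.ofReal) (mul_Sfun (2*x))
  have hy' : ((2*y : ℝ) : ℂ) * ((Shfun (2*y) : ℝ) : ℂ) = ((Real.sinh (2*y) : ℝ) : ℂ) := by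
    exact_mod_cast congrArg (Complex.ofReal) (mul_Shfun (2*y))
  have hcs : Complex.cos ⟨x, y⟩ * (starRingEnd ℂ) (Complex.sin ⟨x, y⟩)
      = (((Real.sin (2*x) : ℝ) : ℂ) - ((Real.sinh (2*y) : ℝ) : ℂ) * Complex.I)/2 := by
    rw [← Complex.sin_conj]
    have h1 : Complex.cos ⟨x,y⟩ * Complex.sin ((starRingEnd ℂ) ⟨x,y⟩)
        = (Complex.sin (⟨x,y⟩ + (starRingEnd ℂ) ⟨x,y⟩) - Complex.sin (⟨x,y⟩ - (starRingEnd ℂ) ⟨x,y⟩))/2 := by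
      rw [Complex.sin_add, Complex.sin_sub]; ring
    rw [h1, Complex.add_conj, Complex.sub_conj, Complex.sin_mul_I,
      ← Complex.ofReal_sin, ← Complex.ofReal_sinh]
  unfold pz qz
  have e1 : (⟨x,y⟩ : ℂ).re = x := rfl
  have e2 : (⟨x,y⟩ : ℂ).im = y := rfl
  rw [mul_assoc, hcs, e1, e2, Complex.normSq_mk, Complex.mk_eq_add_mul_I]
  push_cast at hx' hy' ⊢
  linear_combination (-((x:ℂ) + (y:ℂ)*Complex.I)/2) * hx'
    + (((x:ℂ) + (y:ℂ)*Complex.I)*Complex.I/2) * hy'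
    + (-((y:ℂ)^2*(((Sfun (2*x) : ℝ):ℂ)+((Shfun (2*y) : ℝ):ℂ))/2)) * Complex.I_sq

/-- Let `0 < k1 < k2`, `M2 > 0`, `σ̄2 > 0`. Then `A(ξ) ≠ 0` for every
`ξ ∈ ℂ` with `Re ξ · Im ξ < 0` (the open second and fourth quadrants). -/
theorem stmt_6 (k1 k2 M2 σ2 : ℝ) (hk1 : 0 < k1) (hk12 : k1 < k2) (hM2 : 0 < M2) (hσ2 : 0 < σ2)
    (μ₁ μ₂ ε₁ ε₂ A : ℂ → ℂ)
    (hμ₁ : ∀ ξ : ℂ, IsPrincipalSqrt ((k1 : ℂ) ^ 2 - ξ ^ 2) (μ₁ ξ))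
    (hμ₂ : ∀ ξ : ℂ, IsPrincipalSqrt ((k2 : ℂ) ^ 2 - ξ ^ 2) (μ₂ ξ))
    (hε₁ : ∀ ξ : ℂ, ε₁ ξ = Complex.exp (2 * Complex.I * μ₁ ξ * ((M2 : ℂ) + Complex.I * (σ2 : ℂ))))
    (hε₂ : ∀ ξ : ℂ, ε₂ ξ = Complex.exp (2 * Complex.I * μ₂ ξ * ((M2 : ℂ) + Complex.I * (σ2 : ℂ))))
    (hA : ∀ ξ : ℂ, A ξ =
      (1 - ε₁ ξ * ε₂ ξ) * (μ₁ ξ + μ₂ ξ) + (ε₁ ξ - ε₂ ξ) * (μ₁ ξ - μ₂ ξ)) :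
    ∀ ξ : ℂ, ξ.re * ξ.im < 0 → A ξ ≠ 0 := by
  intro ξ hξ h
  set Mt : ℂ := (M2 : ℂ) + Complex.I * (σ2 : ℂ) with hMt
  set m1 : ℂ := μ₁ ξ
  set m2 : ℂ := μ₂ ξ
  set z1 : ℂ := m1 * Mt with hz1
  set z2 : ℂ := m2 * Mt with hz2
  set ν₁ : ℂ := (k1 : ℂ) ^ 2 - ξ ^ 2 with hν₁
  set ν₂ : ℂ := (k2 : ℂ) ^ 2 - ξ ^ 2 with hν₂
  have hm1sq : m1 ^ 2 = ν₁ := (hμ₁ ξ).1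
  have hm2sq : m2 ^ 2 = ν₂ := (hμ₂ ξ).1
  -- imaginary parts of ν
  have hν₁im : ν₁.im = -(2 * ξ.re * ξ.im) := by
    simp [hν₁, pow_two, Complex.sub_im, Complex.mul_im]; ring
  have hν₂im : ν₂.im = -(2 * ξ.re * ξ.im) := by
    simp [hν₂, pow_two, Complex.sub_im, Complex.mul_im]; ring
  have hi : (0:ℝ) < -(2 * ξ.re * ξ.im) := by nlinarith
  have hi1 : 0 < ν₁.im := by rw [hν₁im]; exact hi
  have hi2 : 0 < ν₂.im := by rw [hν₂im]; exact hi
  -- Mt facts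
  have hMtre : Mt.re = M2 := by simp [hMt]
  have hMtim : Mt.im = σ2 := by simp [hMt]
  set T : ℂ := Mt ^ 2 with hT
  have hTim : T.im = 2 * M2 * σ2 := by
    rw [hT, pow_two, Complex.mul_im, hMtre, hMtim]; ring
  have hMtne : Mt ≠ 0 := by
    intro h0
    rw [h0] at hMtim
    simp at hMtim
    linarith
  have hTne : T ≠ 0 := pow_ne_zero _ hMtne
  have hnT : 0 < Complex.normSq T := Complex.normSq_pos.2 hTne
  -- m_j ≠ 0, z_j ≠ 0
  have hm1ne : m1 ≠ 0 := by
    intro h0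
    rw [h0] at hm1sq
    rw [← hm1sq] at hi1
    simp at hi1
  have hm2ne : m2 ≠ 0 := by
    intro h0
    rw [h0] at hm2sq
    rw [← hm2sq] at hi2
    simp at hi2
  have hz1ne : z1 ≠ 0 := mul_ne_zero hm1ne hMtne
  have hz2ne : z2 ≠ 0 := mul_ne_zero hm2ne hMtne
  -- conj T * z_j ^ 2 = normSq T * ν_j
  have hT1 : (starRingEnd ℂ) T * z1 ^ 2 = ((Complex.normSq T : ℝ) : ℂ) * ν₁ := by
    have hzz : z1 ^ 2 = ν₁ * T := by rw [← hm1sq, hz1, hT]; ring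
    rw [hzz]
    linear_combination ν₁ * Complex.mul_conj T
  have hT2 : (starRingEnd ℂ) T * z2 ^ 2 = ((Complex.normSq T : ℝ) : ℂ) * ν₂ := by
    have hzz : z2 ^ 2 = ν₂ * T := by rw [← hm2sq, hz2, hT]; ring
    rw [hzz]
    linear_combination ν₂ * Complex.mul_conj T
  -- From A ξ = 0 derive F = 0
  have hE1sq : ε₁ ξ = Complex.exp (z1 * Complex.I) ^ 2 := by
    rw [hε₁ ξ, sq, ← Complex.exp_add]
    congr 1
    rw [hz1]; ring
  have hE2sq : ε₂ ξ = Complex.exp (z2 * Complex.I) ^ 2 := by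
    rw [hε₂ ξ, sq, ← Complex.exp_add]
    congr 1
    rw [hz2]; ring
  have h2 : m1 * (1 + ε₁ ξ) * (1 - ε₂ ξ) + m2 * (1 - ε₁ ξ) * (1 + ε₂ ξ) = 0 := by
    linear_combination h - hA ξ
  have hp1 : 1 + ε₁ ξ = 2 * Complex.exp (z1 * Complex.I) * Complex.cos z1 := by
    rw [hE1sq, Complex.exp_mul_I]
    linear_combination (Complex.sin z1)^2 * Complex.I_sq - Complex.sin_sq_add_cos_sq z1
  have hm1' : 1 - ε₁ ξ = -2 * Complex.I * Complex.exp (z1 * Complex.I) * Complex.sin z1 := by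
    rw [hE1sq, Complex.exp_mul_I]
    linear_combination (Complex.sin z1)^2 * Complex.I_sq - Complex.sin_sq_add_cos_sq z1
  have hp2 : 1 + ε₂ ξ = 2 * Complex.exp (z2 * Complex.I) * Complex.cos z2 := by
    rw [hE2sq, Complex.exp_mul_I]
    linear_combination (Complex.sin z2)^2 * Complex.I_sq - Complex.sin_sq_add_cos_sq z2
  have hm2' : 1 - ε₂ ξ = -2 * Complex.I * Complex.exp (z2 * Complex.I) * Complex.sin z2 := by
    rw [hE2sq, Complex.exp_mul_I]
    linear_combination (Complex.sin z2)^2 * Complex.I_sq - Complex.sin_sq_add_cos_sq z2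
  rw [hp1, hm1', hp2, hm2'] at h2
  have h4 : Complex.I * Complex.exp (z1 * Complex.I) * Complex.exp (z2 * Complex.I) *
      (m1 * Complex.cos z1 * Complex.sin z2 + m2 * Complex.sin z1 * Complex.cos z2) = 0 := by
    linear_combination (-1/4) * h2
  have hF : m1 * Complex.cos z1 * Complex.sin z2 + m2 * Complex.sin z1 * Complex.cos z2 = 0 := by
    simpa [Complex.I_ne_zero, Complex.exp_ne_zero, mul_eq_zero] using h4
  -- cos z1 ≠ 0
  have hcos1 : Complex.cos z1 ≠ 0 := by
    intro h0
    obtain ⟨k, hk⟩ := Complex.cos_eq_zero_iff.1 h0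
    have hzr : z1 = (((2 * (k:ℝ) + 1) * Real.pi / 2 : ℝ) : ℂ) := by
      rw [hk]; push_cast; ring
    set r : ℝ := (2 * (k:ℝ) + 1) * Real.pi / 2
    have : (starRingEnd ℂ) T * ((r:ℂ))^2 = ((Complex.normSq T : ℝ) : ℂ) * ν₁ := by
      rw [← hzr]; exact hT1
    have him := congrArg Complex.im this
    simp [Complex.mul_im, Complex.conj_re, Complex.conj_im, Complex.ofReal_re,
      Complex.ofReal_im, ← Complex.ofReal_pow] at him
    -- him : -(r^2 * T.im) = normSq T * ν₁.im  (up to arrangement)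
    nlinarith [sq_nonneg r, mul_pos hnT hi1, mul_nonneg (mul_nonneg (sq_nonneg r) hM2.le) hσ2.le]
  -- weights
  set B : ℂ := -(m2 * Complex.cos z2) with hB
  set Aa : ℂ := m1 * Complex.cos z1 with hAa
  have hAane : Aa ≠ 0 := mul_ne_zero hm1ne hcos1
  set w1 : ℝ := Complex.normSq B with hw1
  set w2 : ℝ := Complex.normSq Aa with hw2
  have hw1nn : 0 ≤ w1 := Complex.normSq_nonneg _
  have hw2pos : 0 < w2 := Complex.normSq_pos.2 hAane
  -- continuity and flux
  have hcont : B * Complex.sin z1 = Aa * Complex.sin z2 := by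
    rw [hB, hAa]; linear_combination -hF
  have hflux : B * z1 * Complex.cos z1 + Aa * z2 * Complex.cos z2 = 0 := by
    rw [hB, hAa, hz1, hz2]; ring
  have hzero : (B * z1 * Complex.cos z1) * ((starRingEnd ℂ) B * (starRingEnd ℂ) (Complex.sin z1))
      + (Aa * z2 * Complex.cos z2) * ((starRingEnd ℂ) Aa * (starRingEnd ℂ) (Complex.sin z2)) = 0 := by
    have hcc : (starRingEnd ℂ) B * (starRingEnd ℂ) (Complex.sin z1)
        = (starRingEnd ℂ) Aa * (starRingEnd ℂ) (Complex.sin z2) := by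
      rw [← map_mul, ← map_mul, hcont]
    rw [hcc]
    linear_combination ((starRingEnd ℂ) Aa * (starRingEnd ℂ) (Complex.sin z2)) * hflux
  -- master identity
  have c1' := keyId z1
  have c2' := keyId z2
  have hmaster : z1^2 * ((w1 * qz z1 : ℝ) : ℂ) + z2^2 * ((w2 * qz z2 : ℝ) : ℂ)
      = ((w1 * pz z1 + w2 * pz z2 : ℝ) : ℂ) := by
    push_cast
    rw [hw1, hw2]
    push_cast
    linear_combination ((Complex.normSq B : ℝ) : ℂ) * c1' + ((Complex.normSq Aa : ℝ) : ℂ) * c2'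
      - hzero + (z1 * Complex.cos z1 * (starRingEnd ℂ) (Complex.sin z1)) * (Complex.mul_conj B)
      + (z2 * Complex.cos z2 * (starRingEnd ℂ) (Complex.sin z2)) * (Complex.mul_conj Aa)
  -- multiply by conj T and take imaginary parts
  set r1 : ℝ := w1 * qz z1 with hr1
  set r2 : ℝ := w2 * qz z2 with hr2
  have hL : (starRingEnd ℂ) T * (z1^2 * ((r1 : ℝ) : ℂ) + z2^2 * ((r2 : ℝ) : ℂ))
      = ((Complex.normSq T : ℝ) : ℂ) * (((r1 : ℝ) : ℂ) * ν₁ + ((r2 : ℝ) : ℂ) * ν₂) := by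
    linear_combination ((r1 : ℝ) : ℂ) * hT1 + ((r2 : ℝ) : ℂ) * hT2
  have him : (((Complex.normSq T : ℝ) : ℂ) * (((r1:ℝ):ℂ) * ν₁ + ((r2:ℝ):ℂ) * ν₂)).im
      = ((starRingEnd ℂ) T * ((w1 * pz z1 + w2 * pz z2 : ℝ) : ℂ)).im := by
    rw [← hL, hmaster]
  simp [Complex.mul_im, Complex.add_im, Complex.add_re, Complex.mul_re,
    Complex.ofReal_re, Complex.ofReal_im, Complex.conj_re, Complex.conj_im] at him
  -- him is now a real equation; derive contradiction
  have hq1 : 0 < qz z1 := qz_pos hz1ne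
  have hq2 : 0 < qz z2 := qz_pos hz2ne
  have hr1nn : 0 ≤ r1 := mul_nonneg hw1nn hq1.le
  have hr2pos : 0 < r2 := mul_pos hw2pos hq2
  have hp1nn : 0 ≤ pz z1 := pz_nonneg _
  have hp2nn : 0 ≤ pz z2 := pz_nonneg _
  have hLpos : 0 < Complex.normSq T * (r1 * ν₁.im + r2 * ν₂.im) :=
    mul_pos hnT (add_pos_of_nonneg_of_pos (mul_nonneg hr1nn hi1.le) (mul_pos hr2pos hi2))
  have hTimpos : 0 < T.im := by rw [hTim]; positivity
  have hRnp : -(T.im * (w1 * pz z1 + w2 * pz z2)) ≤ 0 := by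
    have : 0 ≤ T.im * (w1 * pz z1 + w2 * pz z2) :=
      mul_nonneg hTimpos.le (add_nonneg (mul_nonneg hw1nn hp1nn) (mul_nonneg hw2pos.le hp2nn))
    linarith
  linarith
end

section
/- Let 0 < k1 < k2, M2 > 0, σ̄2 > 0 and let ξ ∈ ℂ satisfy Re ξ · Im ξ < 0. If complex numbers c₁, c₂, d₁, d₂ satisfy the four equations c₁·exp(i·μ₁(ξ)·M̃2) + c₂·exp(−i·μ₁(ξ)·M̃2) = 0, d₁·exp(i·μ₂(ξ)·M̃2) + d₂·exp(−i·μ₂(ξ)·M̃2) = 0, c₁ + c₂ = d₁ + d₂, and μ₁(ξ)·(c₁ − c₂) = μ₂(ξ)·(d₂ − d₁), then c₁ = c₂ = d₁ = d₂ = 0. (This expresses that the PML-truncated two-layer waveguide eigenvalue problem has no eigenvalues in the open second or fourth quadrant.) -/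
open Complex

lemma sqrt_quad {z w : ℂ} (hsq : w ^ 2 = z)
    (hpos : 0 < w.re ∨ (w.re = 0 ∧ 0 ≤ w.im)) (hz : 0 < z.im) :
    0 < w.re ∧ 0 < w.im := by
  have him : w.re * w.im + w.im * w.re = z.im := by
    have := congrArg Complex.im hsq
    simpa [pow_two, Complex.mul_im] using this
  rcases hpos with h1 | ⟨h1, _⟩
  · exact ⟨h1, by nlinarith⟩
  · rw [h1] at him; simp at him; rw [← him] at hz; simp at hz

lemma key_identity (α : ℂ) (hy : 0 < α.im) :
    ∃ p q : ℝ, 0 < p ∧ 0 ≤ q ∧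
      α ^ 2 * (p : ℂ) - (q : ℂ) =
        -(α * Complex.cos α * (starRingEnd ℂ) (Complex.sin α)) := by
  obtain ⟨x, y, rfl⟩ : ∃ x y : ℝ, α = (x : ℂ) + (y : ℂ) * I :=
    ⟨α.re, α.im, (Complex.re_add_im α).symm⟩
  have hy' : 0 < y := by simpa using hy
  set s := Real.sin x with hs
  set c := Real.cos x with hc
  set u := Real.sinh y with hu
  set v := Real.cosh y with hv
  set S : ℝ := Real.sinh (2*y) / (2*y) with hSdef
  set Cc : ℝ := if x = 0 then 1 else Real.sin (2*x) / (2*x) with hCdef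
  have E1 : y * S = u * v := by
    rw [hSdef, Real.sinh_two_mul]
    field_simp
    ring
  have E2 : x * Cc = s * c := by
    rw [hCdef]
    split_ifs with h
    · simp [h, hs, hc]
    · rw [Real.sin_two_mul]
      field_simp
      ring
  have hS : 1 < S := by
    rw [hSdef, lt_div_iff₀ (by linarith : (0:ℝ) < 2*y)]
    simpa using (Real.self_lt_sinh_iff.mpr (by linarith : (0:ℝ) < 2*y))
  have hC : |Cc| ≤ 1 := by
    rw [hCdef]
    split_ifs with h
    · simp
    · rw [abs_div, div_le_one (by positivity)]
      exact Real.abs_sin_le_abs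
  obtain ⟨hCl, hCr⟩ := abs_le.mp hC
  clear_value S Cc
  refine ⟨(S - Cc)/2, (x^2 + y^2) * (S + Cc)/2, by linarith, ?_, ?_⟩
  · have : 0 ≤ x^2 + y^2 := by positivity
    nlinarith
  · have hsin : Complex.sin ((x:ℂ) + (y:ℂ) * I) = (s:ℂ) * v + (c:ℂ) * u * I := by
      rw [Complex.sin_add_mul_I]
      rw [hs, hc, hu, hv]
      push_cast
      ring
    have hcos : Complex.cos ((x:ℂ) + (y:ℂ) * I) = (c:ℂ) * v - (s:ℂ) * u * I := by
      rw [Complex.cos_add_mul_I]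
      rw [hs, hc, hu, hv]
      push_cast
      ring
    have hconj : (starRingEnd ℂ) (Complex.sin ((x:ℂ) + (y:ℂ) * I)) =
        (s:ℂ) * v - (c:ℂ) * u * I := by
      rw [hsin]
      simp [map_add, map_mul, Complex.conj_ofReal, Complex.conj_I]
      ring
    rw [hcos, hconj]
    apply Complex.ext
    · simp only [Complex.sub_re, Complex.mul_re, Complex.mul_im, Complex.add_re,
        Complex.add_im, Complex.sub_im, Complex.neg_re, Complex.neg_im,
        Complex.ofReal_re, Complex.ofReal_im, Complex.I_re, Complex.I_im, pow_two]
      ring_nf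
      have h1 : v^2 - u^2 = 1 := Real.cosh_sq_sub_sinh_sq y
      have h4 : s^2 + c^2 = 1 := Real.sin_sq_add_cos_sq x
      linear_combination (x*s*c) * h1 + (-x) * E2 + (y*u*v) * h4 + (-y) * E1
    · simp only [Complex.sub_re, Complex.mul_re, Complex.mul_im, Complex.add_re,
        Complex.add_im, Complex.sub_im, Complex.neg_re, Complex.neg_im,
        Complex.ofReal_re, Complex.ofReal_im, Complex.I_re, Complex.I_im, pow_two]
      ring_nf
      have h1 : v^2 - u^2 = 1 := Real.cosh_sq_sub_sinh_sq y
      have h4 : s^2 + c^2 = 1 := Real.sin_sq_add_cos_sq x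
      linear_combination (y*s*c) * h1 + (-y) * E2 + (-x*u*v) * h4 + x * E1

lemma im_helper (n K P : ℝ) (ξ : ℂ) :
    ((n:ℂ) * ((K:ℂ) - ξ^2 * (P:ℂ))).im = n * (-((ξ^2).im * P)) := by
  simp [Complex.mul_im, Complex.sub_im, Complex.sub_re, Complex.mul_re]

lemma im_helper2 (Q : ℝ) (W : ℂ) :
    ((Q:ℂ) * (starRingEnd ℂ) W).im = Q * (-W.im) := by
  simp [Complex.mul_im]

lemma pos_cancel {A P Q m1 m2 r : ℝ} (hA : 0 < A) (hP : 0 ≤ P) (hQ : 0 ≤ Q)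
    (hm1 : 0 < m1) (hm2 : 0 < m2) (hr : r < 0)
    (h : A * (-(2*r*P)) = Q * (-(2*m1*m2))) : P = 0 := by
  by_contra hne
  have hPpos : 0 < P := lt_of_le_of_ne hP (Ne.symm hne)
  have h1 : 0 < A * (-(2*r*P)) := by
    nlinarith [mul_pos (mul_pos hA hPpos) (by linarith : (0:ℝ) < -r)]
  have h2 : Q * (-(2*m1*m2)) ≤ 0 := by
    nlinarith [mul_nonneg hQ (mul_pos hm1 hm2).le]
  linarith

/-- Let `0 < k1 < k2`, `M2 > 0`, `σ̄2 > 0`, and let `ξ ∈ ℂ` with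
`Re ξ · Im ξ < 0`. If `c₁, c₂, d₁, d₂ ∈ ℂ` satisfy
`c₁ e^{i μ₁ M̃2} + c₂ e^{−i μ₁ M̃2} = 0`, `d₁ e^{i μ₂ M̃2} + d₂ e^{−i μ₂ M̃2} = 0`,
`c₁ + c₂ = d₁ + d₂` and `μ₁ (c₁ − c₂) = μ₂ (d₂ − d₁)`, then `c₁ = c₂ = d₁ = d₂ = 0`. -/
theorem stmt_7 (k1 k2 M2 σ2 : ℝ) (hk1 : 0 < k1) (hk12 : k1 < k2) (hM2 : 0 < M2) (hσ2 : 0 < σ2)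
    (μ₁ μ₂ : ℂ → ℂ)
    (hμ₁ : ∀ ξ : ℂ, IsPrincipalSqrt ((k1 : ℂ) ^ 2 - ξ ^ 2) (μ₁ ξ))
    (hμ₂ : ∀ ξ : ℂ, IsPrincipalSqrt ((k2 : ℂ) ^ 2 - ξ ^ 2) (μ₂ ξ))
    (ξ : ℂ) (hξ : ξ.re * ξ.im < 0)
    (c₁ c₂ d₁ d₂ : ℂ)
    (h1 : c₁ * Complex.exp (Complex.I * μ₁ ξ * ((M2 : ℂ) + Complex.I * (σ2 : ℂ))) +
          c₂ * Complex.exp (-(Complex.I * μ₁ ξ * ((M2 : ℂ) + Complex.I * (σ2 : ℂ)))) = 0)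
    (h2 : d₁ * Complex.exp (Complex.I * μ₂ ξ * ((M2 : ℂ) + Complex.I * (σ2 : ℂ))) +
          d₂ * Complex.exp (-(Complex.I * μ₂ ξ * ((M2 : ℂ) + Complex.I * (σ2 : ℂ)))) = 0)
    (h3 : c₁ + c₂ = d₁ + d₂)
    (h4 : μ₁ ξ * (c₁ - c₂) = μ₂ ξ * (d₂ - d₁)) :
    c₁ = 0 ∧ c₂ = 0 ∧ d₁ = 0 ∧ d₂ = 0 := by
  set M : ℂ := (M2 : ℂ) + Complex.I * (σ2 : ℂ) with hMdef
  have hMre : M.re = M2 := by simp [hMdef]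
  have hMim : M.im = σ2 := by simp [hMdef]
  clear_value M
  -- quadrant facts for μ₁ ξ and μ₂ ξ
  have hz1 : 0 < ((k1:ℂ)^2 - ξ^2).im := by
    simp only [Complex.sub_im, pow_two, Complex.mul_im, Complex.ofReal_re, Complex.ofReal_im]
    nlinarith
  have hz2 : 0 < ((k2:ℂ)^2 - ξ^2).im := by
    simp only [Complex.sub_im, pow_two, Complex.mul_im, Complex.ofReal_re, Complex.ofReal_im]
    nlinarith
  obtain ⟨hsq1, hpos1⟩ := hμ₁ ξ
  obtain ⟨hsq2, hpos2⟩ := hμ₂ ξ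
  obtain ⟨ha1, hb1⟩ := sqrt_quad hsq1 hpos1 hz1
  obtain ⟨ha2, hb2⟩ := sqrt_quad hsq2 hpos2 hz2
  set w1 : ℂ := μ₁ ξ * M with hw1
  set w2 : ℂ := μ₂ ξ * M with hw2
  clear_value w1 w2
  have hw1im : 0 < w1.im := by
    rw [hw1]; simp only [Complex.mul_im, hMre, hMim]; nlinarith
  have hw2im : 0 < w2.im := by
    rw [hw2]; simp only [Complex.mul_im, hMre, hMim]; nlinarith
  obtain ⟨p1, q1, hp1, hq1, hkey1⟩ := key_identity w1 hw1im
  obtain ⟨p2, q2, hp2, hq2, hkey2⟩ := key_identity w2 hw2im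
  -- rewrite the exponentials
  set E1 : ℂ := Complex.exp (Complex.I * w1) with hE1def
  set E2 : ℂ := Complex.exp (Complex.I * w2) with hE2def
  have hE1ne : E1 ≠ 0 := Complex.exp_ne_zero _
  have hE2ne : E2 ≠ 0 := Complex.exp_ne_zero _
  clear_value E1 E2
  have e1 : Complex.exp (Complex.I * μ₁ ξ * M) = E1 := by
    rw [hE1def]; congr 1; rw [hw1]; ring
  have e1' : Complex.exp (-(Complex.I * μ₁ ξ * M)) = E1⁻¹ := by
    rw [Complex.exp_neg, e1]
  have e2 : Complex.exp (Complex.I * μ₂ ξ * M) = E2 := by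
    rw [hE2def]; congr 1; rw [hw2]; ring
  have e2' : Complex.exp (-(Complex.I * μ₂ ξ * M)) = E2⁻¹ := by
    rw [Complex.exp_neg, e2]
  rw [e1, e1'] at h1
  rw [e2, e2'] at h2
  have hc2 : c₂ = -c₁ * E1^2 := by
    field_simp at h1
    linear_combination h1
  have hd2 : d₂ = -d₁ * E2^2 := by
    field_simp at h2
    linear_combination h2
  -- the sin-form amplitudes
  set CC : ℂ := -2 * Complex.I * c₁ * E1 with hCCdef
  set DD : ℂ := -2 * Complex.I * d₁ * E2 with hDDdef
  clear_value CC DD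
  have g1 : Complex.exp (-w1 * Complex.I) = E1⁻¹ := by
    rw [hE1def, ← Complex.exp_neg]; congr 1; ring
  have g2 : Complex.exp (w1 * Complex.I) = E1 := by
    rw [hE1def]; congr 1; ring
  have g3 : Complex.exp (-w2 * Complex.I) = E2⁻¹ := by
    rw [hE2def, ← Complex.exp_neg]; congr 1; ring
  have g4 : Complex.exp (w2 * Complex.I) = E2 := by
    rw [hE2def]; congr 1; ring
  have hsinw1 : Complex.sin w1 = (E1⁻¹ - E1) * Complex.I / 2 := by
    rw [Complex.sin, g1, g2]
  have hsinw2 : Complex.sin w2 = (E2⁻¹ - E2) * Complex.I / 2 := by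
    rw [Complex.sin, g3, g4]
  have hcosw1 : Complex.cos w1 = (E1 + E1⁻¹) / 2 := by
    rw [Complex.cos, g1, g2]
  have hcosw2 : Complex.cos w2 = (E2 + E2⁻¹) / 2 := by
    rw [Complex.cos, g3, g4]
  have hIsq : Complex.I * Complex.I = -1 := Complex.I_mul_I
  have claimA1 : CC * Complex.sin w1 = c₁ + c₂ := by
    rw [hsinw1, hCCdef, hc2]
    field_simp
    linear_combination (c₁ * E1^2 - c₁) * hIsq
  have claimA2 : DD * Complex.sin w2 = d₁ + d₂ := by
    rw [hsinw2, hDDdef, hd2]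
    field_simp
    linear_combination (d₁ * E2^2 - d₁) * hIsq
  have claimB1 : -(CC * w1 * Complex.cos w1) = Complex.I * w1 * (c₁ - c₂) := by
    rw [hcosw1, hCCdef, hc2]
    field_simp
    ring
  have claimB2 : -(DD * w2 * Complex.cos w2) = Complex.I * w2 * (d₁ - d₂) := by
    rw [hcosw2, hDDdef, hd2]
    field_simp
    ring
  -- master identity
  set nC : ℝ := Complex.normSq CC with hnC
  set nD : ℝ := Complex.normSq DD with hnD
  clear_value nC nD
  have master : (nC : ℂ) * (w1^2 * (p1:ℂ) - (q1:ℂ)) + (nD : ℂ) * (w2^2 * (p2:ℂ) - (q2:ℂ)) = 0 := by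
    rw [hkey1, hkey2]
    have step1 : (nC : ℂ) * (-(w1 * Complex.cos w1 * (starRingEnd ℂ) (Complex.sin w1))) =
        (-(CC * w1 * Complex.cos w1)) * (starRingEnd ℂ) (CC * Complex.sin w1) := by
      rw [map_mul, hnC]
      linear_combination (w1 * Complex.cos w1 * (starRingEnd ℂ) (Complex.sin w1)) *
        (Complex.mul_conj CC)
    have step2 : (nD : ℂ) * (-(w2 * Complex.cos w2 * (starRingEnd ℂ) (Complex.sin w2))) =
        (-(DD * w2 * Complex.cos w2)) * (starRingEnd ℂ) (DD * Complex.sin w2) := by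
      rw [map_mul, hnD]
      linear_combination (w2 * Complex.cos w2 * (starRingEnd ℂ) (Complex.sin w2)) *
        (Complex.mul_conj DD)
    rw [step1, step2, claimA1, claimA2, claimB1, claimB2, ← h3, hw1, hw2]
    linear_combination Complex.I * M * (starRingEnd ℂ) (c₁ + c₂) * h4
  -- the two squared relations
  have hμsq1 : w1^2 = ((k1:ℂ)^2 - ξ^2) * M^2 := by
    rw [hw1, mul_pow, hsq1]
  have hμsq2 : w2^2 = ((k2:ℂ)^2 - ξ^2) * M^2 := by
    rw [hw2, mul_pow, hsq2]
  have hmaster2 : M^2 * (((k1^2*nC*p1 + k2^2*nD*p2 : ℝ):ℂ) - ξ^2 * ((nC*p1 + nD*p2 : ℝ):ℂ))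
      = ((nC*q1 + nD*q2 : ℝ):ℂ) := by
    push_cast
    linear_combination master - ((nC:ℂ)*p1) * hμsq1 - ((nD:ℂ)*p2) * hμsq2
  -- multiply by conj (M^2) and take imaginary parts
  have h5 : (Complex.normSq (M^2) : ℂ) *
      (((k1^2*nC*p1 + k2^2*nD*p2 : ℝ):ℂ) - ξ^2 * ((nC*p1 + nD*p2 : ℝ):ℂ)) =
      ((nC*q1 + nD*q2 : ℝ):ℂ) * (starRingEnd ℂ) (M^2) := by
    linear_combination (starRingEnd ℂ) (M^2) * hmaster2 -
      (((k1^2*nC*p1 + k2^2*nD*p2 : ℝ):ℂ) - ξ^2 * ((nC*p1 + nD*p2 : ℝ):ℂ)) *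
        (Complex.mul_conj (M^2))
  have hM2im : (M^2).im = 2*M2*σ2 := by
    rw [hMdef]; simp [pow_two, Complex.mul_im, Complex.mul_re]; ring
  have hξ2im : (ξ^2).im = 2*(ξ.re*ξ.im) := by
    simp [pow_two, Complex.mul_im]; ring
  have him1 := im_helper (Complex.normSq (M^2)) (k1^2*nC*p1 + k2^2*nD*p2) (nC*p1 + nD*p2) ξ
  have him2 := im_helper2 (nC*q1 + nD*q2) (M^2)
  have h5im : Complex.normSq (M^2) * (-((ξ^2).im * (nC*p1 + nD*p2))) =
      (nC*q1 + nD*q2) * (-(M^2).im) := by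
    rw [← him1, ← him2, h5]
  rw [hξ2im, hM2im] at h5im
  have hnCnn : (0:ℝ) ≤ nC := by rw [hnC]; exact Complex.normSq_nonneg _
  have hnDnn : (0:ℝ) ≤ nD := by rw [hnD]; exact Complex.normSq_nonneg _
  have hQnn : (0:ℝ) ≤ nC*q1 + nD*q2 :=
    add_nonneg (mul_nonneg hnCnn hq1) (mul_nonneg hnDnn hq2)
  have hMne : M ≠ 0 := by
    intro h
    rw [h] at hMim
    simp at hMim
    exact hσ2.ne' hMim.symm
  have hnsq : (0:ℝ) < Complex.normSq (M^2) :=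
    Complex.normSq_pos.mpr (pow_ne_zero 2 hMne)
  have hPnn : (0:ℝ) ≤ nC*p1 + nD*p2 :=
    add_nonneg (mul_nonneg hnCnn hp1.le) (mul_nonneg hnDnn hp2.le)
  have hP0 : nC*p1 + nD*p2 = 0 :=
    pos_cancel hnsq hPnn hQnn hM2 hσ2 hξ h5im
  have ht1 : (0:ℝ) ≤ nC*p1 := mul_nonneg hnCnn hp1.le
  have ht2 : (0:ℝ) ≤ nD*p2 := mul_nonneg hnDnn hp2.le
  have hnCp : nC*p1 = 0 := by linarith
  have hnDp : nD*p2 = 0 := by linarith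
  have hnC0 : nC = 0 := by
    rcases mul_eq_zero.mp hnCp with h | h
    · exact h
    · exact absurd h hp1.ne'
  have hnD0 : nD = 0 := by
    rcases mul_eq_zero.mp hnDp with h | h
    · exact h
    · exact absurd h hp2.ne'
  have hCC0 : CC = 0 := Complex.normSq_eq_zero.mp (by rw [← hnC]; exact hnC0)
  have hDD0 : DD = 0 := Complex.normSq_eq_zero.mp (by rw [← hnD]; exact hnD0)
  have hc10 : c₁ = 0 := by
    rw [hCCdef] at hCC0
    simpa [mul_eq_zero, Complex.I_ne_zero, hE1ne] using hCC0
  have hd10 : d₁ = 0 := by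
    rw [hDDdef] at hDD0
    simpa [mul_eq_zero, Complex.I_ne_zero, hE2ne] using hDD0
  refine ⟨hc10, ?_, hd10, ?_⟩
  · rw [hc2, hc10]; ring
  · rw [hd2, hd10]; ring
end

section
/- Let 0 < k1 < k2, M2 > 0, σ̄2 > 0 and M̃2 = M2 + i·σ̄2. For μ in the closed first quadrant Q = {μ ∈ ℂ : Re μ ≥ 0, Im μ ≥ 0}, let ν(μ) be the principal square root of k2² − k1² + μ², and define B(μ) = (1 − exp(2i·μ·M̃2)·exp(2i·ν(μ)·M̃2))·(μ + ν(μ)) + (exp(2i·μ·M̃2) − exp(2i·ν(μ)·M̃2))·(μ − ν(μ)). Then B(μ) − 2μ → 0 as |μ| → ∞ with μ ∈ Q; in particular |B(μ)| → ∞ as |μ| → ∞ within Q. -/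
private theorem tri4 (z1 z2 z3 z4 : ℂ) :
    ‖z1 - z2 + z3 - z4‖ ≤
      ‖z1‖ + ‖z2‖ + ‖z3‖ + ‖z4‖ := by
  calc ‖z1 - z2 + z3 - z4‖
      ≤ ‖z1 - z2 + z3‖ + ‖z4‖ := norm_sub_le _ _
    _ ≤ (‖z1 - z2‖ + ‖z3‖) + ‖z4‖ := by
        gcongr; exact norm_add_le _ _
    _ ≤ ((‖z1‖ + ‖z2‖) + ‖z3‖) + ‖z4‖ := by
        gcongr; exact norm_sub_le _ _
    _ = _ := by ring

set_option maxHeartbeats 4000000 in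
/-- Let `0 < k1 < k2`, `M2 > 0`, `σ̄2 > 0`, `M̃2 = M2 + i σ̄2`. With `ν(μ)`
the principal square root of `k2² − k1² + μ²`, and
`B(μ) = (1 − e^{2iμM̃2} e^{2iν(μ)M̃2})(μ + ν(μ)) + (e^{2iμM̃2} − e^{2iν(μ)M̃2})(μ − ν(μ))`,
one has `B(μ) − 2μ → 0` as `|μ| → ∞` within the closed first quadrant; in particular
`|B(μ)| → ∞` as `|μ| → ∞` within the closed first quadrant. -/
theorem stmt_8 (k1 k2 M2 σ2 : ℝ) (hk1 : 0 < k1) (hk12 : k1 < k2) (hM2 : 0 < M2) (hσ2 : 0 < σ2)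
    (ν B : ℂ → ℂ)
    (hν : ∀ μ : ℂ, IsPrincipalSqrt ((k2 : ℂ) ^ 2 - (k1 : ℂ) ^ 2 + μ ^ 2) (ν μ))
    (hB : ∀ μ : ℂ, B μ =
      (1 - Complex.exp (2 * Complex.I * μ * ((M2 : ℂ) + Complex.I * (σ2 : ℂ))) *
            Complex.exp (2 * Complex.I * ν μ * ((M2 : ℂ) + Complex.I * (σ2 : ℂ)))) * (μ + ν μ) +
      (Complex.exp (2 * Complex.I * μ * ((M2 : ℂ) + Complex.I * (σ2 : ℂ))) -
            Complex.exp (2 * Complex.I * ν μ * ((M2 : ℂ) + Complex.I * (σ2 : ℂ)))) * (μ - ν μ)) :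
    (∀ ε : ℝ, 0 < ε → ∃ R : ℝ, ∀ μ : ℂ, 0 ≤ μ.re → 0 ≤ μ.im →
      R ≤ ‖μ‖ → ‖B μ - 2 * μ‖ < ε) ∧
    (∀ M : ℝ, ∃ R : ℝ, ∀ μ : ℂ, 0 ≤ μ.re → 0 ≤ μ.im →
      R ≤ ‖μ‖ → M ≤ ‖B μ‖) := by
  set c : ℝ := k2 ^ 2 - k1 ^ 2 with hc_def
  have hc : 0 < c := by nlinarith
  set m : ℝ := min M2 σ2 with hm_def
  have hm : 0 < m := lt_min hM2 hσ2
  -- bound on the exponential factors for ζ in the closed first quadrant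
  have hexp : ∀ ζ : ℂ, 0 ≤ ζ.re → 0 ≤ ζ.im →
      ‖Complex.exp (2 * Complex.I * ζ * ((M2 : ℂ) + Complex.I * (σ2 : ℂ)))‖
        ≤ Real.exp (-(2 * m) * ‖ζ‖) := by
    intro ζ h1 h2
    rw [Complex.norm_exp]
    apply Real.exp_le_exp.mpr
    have hre : (2 * Complex.I * ζ * ((M2 : ℂ) + Complex.I * (σ2 : ℂ))).re
        = -(2 * (ζ.im * M2 + ζ.re * σ2)) := by
      simp [Complex.mul_re, Complex.mul_im]
      ring
    rw [hre]
    have habs : ‖ζ‖ ≤ ζ.re + ζ.im := by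
      have h := Complex.norm_le_abs_re_add_abs_im ζ
      rwa [abs_of_nonneg h1, abs_of_nonneg h2] at h
    have hm1 : m ≤ M2 := min_le_left _ _
    have hm2 : m ≤ σ2 := min_le_right _ _
    nlinarith [mul_le_mul_of_nonneg_left habs hm.le,
      mul_le_mul_of_nonneg_right hm1 h2, mul_le_mul_of_nonneg_right hm2 h1]
  -- main ε-bound
  have main : ∀ ε : ℝ, 0 < ε → ∃ R : ℝ, ∀ μ : ℂ, 0 ≤ μ.re → 0 ≤ μ.im →
      R ≤ ‖μ‖ → ‖B μ - 2 * μ‖ < ε := by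
    intro ε hε
    set A : ℝ := 3 * c + 12 / m ^ 2 with hA_def
    have hA : 0 < A := by positivity
    refine ⟨max (Real.sqrt (2 * c)) (A / ε + 1), ?_⟩
    intro μ hre him hR
    have hBμ := hB μ
    set f : ℂ := Complex.exp (2 * Complex.I * μ * ((M2 : ℂ) + Complex.I * (σ2 : ℂ))) with hf_def
    set g : ℂ := Complex.exp (2 * Complex.I * ν μ * ((M2 : ℂ) + Complex.I * (σ2 : ℂ))) with hg_def
    set a : ℝ := ‖μ‖ with ha_def
    have ha1 : A / ε + 1 ≤ a := le_trans (le_max_right _ _) hR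
    have ha0 : 0 < a := lt_of_lt_of_le (by positivity) ha1
    have ha2c : 2 * c ≤ a ^ 2 := by
      have hs : Real.sqrt (2 * c) ≤ a := le_trans (le_max_left _ _) hR
      nlinarith [Real.sq_sqrt (by positivity : (0:ℝ) ≤ 2 * c), Real.sqrt_nonneg (2 * c)]
    obtain ⟨hsq, hor⟩ := hν μ
    have hsq' : (ν μ) ^ 2 = (c : ℂ) + μ ^ 2 := by
      rw [hsq]; push_cast [hc_def]; ring
    -- ν lies in the closed first quadrant
    have hνre : 0 ≤ (ν μ).re := by
      rcases hor with h | h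
      exacts [h.le, h.1.ge]
    have him2 : (ν μ).re * (ν μ).im = μ.re * μ.im := by
      have h := congrArg Complex.im hsq'
      simp [pow_two, Complex.mul_im, Complex.add_im] at h
      nlinarith [h]
    have hνim : 0 ≤ (ν μ).im := by
      rcases hor with h | h
      · nlinarith [mul_nonneg hre him]
      · exact h.2
    -- |μ| ≤ |ν + μ|
    have habs_sum : a ≤ ‖ν μ + μ‖ := by
      have hsqle : a ^ 2 ≤ ‖ν μ + μ‖ ^ 2 := by
        rw [Complex.sq_norm, Complex.sq_norm]
        simp only [Complex.normSq_apply, Complex.add_re, Complex.add_im]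
        nlinarith [mul_nonneg hνre hre, mul_nonneg hνim him, sq_nonneg (ν μ).re,
          sq_nonneg (ν μ).im]
      nlinarith [norm_nonneg (ν μ + μ)]
    -- |ν - μ| * |ν + μ| = c
    have hprod : ‖ν μ - μ‖ * ‖ν μ + μ‖ = c := by
      have hfac : (ν μ - μ) * (ν μ + μ) = (c : ℂ) := by linear_combination hsq'
      have h := congrArg (‖·‖) hfac
      rwa [norm_mul, Complex.norm_real, Real.norm_of_nonneg hc.le] at h
    set d : ℝ := ‖ν μ - μ‖ with hd_def
    have hd0 : 0 ≤ d := norm_nonneg _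
    have hda : d * a ≤ c := by
      calc d * a ≤ d * ‖ν μ + μ‖ := mul_le_mul_of_nonneg_left habs_sum hd0
        _ = c := hprod
    have hd' : d ≤ c / a := (le_div_iff₀ ha0).mpr hda
    have hdha : d ≤ a / 2 := by nlinarith
    -- |ν| bounds
    have hνa : ‖ν μ‖ ≤ 2 * a := by
      calc ‖ν μ‖ = ‖(ν μ - μ) + μ‖ := by rw [sub_add_cancel]
        _ ≤ d + a := norm_add_le _ _
        _ ≤ 2 * a := by nlinarith
    have hμν : ‖μ - ν μ‖ = d := norm_sub_rev μ (ν μ)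
    have hνa' : a / 2 ≤ ‖ν μ‖ := by
      have h := norm_add_le (ν μ) (μ - ν μ)
      rw [add_sub_cancel, hμν, ← ha_def] at h
      linarith
    set Eμ : ℝ := ‖f‖ with hEμ_def
    set Eν : ℝ := ‖g‖ with hEν_def
    have hEμ0 : 0 ≤ Eμ := norm_nonneg _
    have hEν0 : 0 ≤ Eν := norm_nonneg _
    set E : ℝ := Real.exp (-(m * a)) with hE_def
    have hE0 : 0 < E := Real.exp_pos _
    have hexpμ : Eμ ≤ Real.exp (-(2 * m) * a) := by
      rw [hEμ_def, hf_def]; exact hexp μ hre him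
    have hexpν : Eν ≤ Real.exp (-(2 * m) * ‖ν μ‖) := by
      rw [hEν_def, hg_def]; exact hexp (ν μ) hνre hνim
    have hEμ1 : Eμ ≤ 1 := by
      calc Eμ ≤ Real.exp (-(2 * m) * a) := hexpμ
        _ ≤ Real.exp 0 := Real.exp_le_exp.mpr (by nlinarith)
        _ = 1 := Real.exp_zero
    have hEνE : Eν ≤ E := by
      calc Eν ≤ Real.exp (-(2 * m) * ‖ν μ‖) := hexpν
        _ ≤ E := Real.exp_le_exp.mpr (by nlinarith)
    have hE1 : E ≤ 1 := by
      calc E ≤ Real.exp 0 := Real.exp_le_exp.mpr (by nlinarith)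
        _ = 1 := Real.exp_zero
    -- E ≤ 4 / (m² a²)
    have hEbound : E ≤ 4 / (m ^ 2 * a ^ 2) := by
      have h1 : m * a / 2 ≤ Real.exp (m * a / 2) := by
        have h := Real.add_one_le_exp (m * a / 2)
        linarith
      have h2 : (m * a / 2) ^ 2 ≤ Real.exp (m * a) := by
        have hh : Real.exp (m * a) = Real.exp (m * a / 2) * Real.exp (m * a / 2) := by
          rw [← Real.exp_add]; ring_nf
        rw [hh]
        have hnn : 0 ≤ m * a / 2 := by positivity
        nlinarith [Real.exp_pos (m * a / 2)]
      have h3 : E * Real.exp (m * a) = 1 := by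
        rw [hE_def, ← Real.exp_add]; simp
      have h4 : E * ((m * a / 2) ^ 2) ≤ E * Real.exp (m * a) :=
        mul_le_mul_of_nonneg_left h2 hE0.le
      rw [h3] at h4
      rw [le_div_iff₀ (by positivity)]
      have h5 : E * (m ^ 2 * a ^ 2) = 4 * (E * ((m * a / 2) ^ 2)) := by ring
      rw [h5]; linarith
    -- decompose B μ - 2 μ
    have hBexp : B μ - 2 * μ = (ν μ - μ) - f * g * (μ + ν μ) + f * (μ - ν μ) - g * (μ - ν μ) := by
      rw [hBμ]; ring
    have hsum : ‖μ + ν μ‖ ≤ 3 * a := by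
      calc ‖μ + ν μ‖ ≤ a + ‖ν μ‖ := norm_add_le _ _
        _ ≤ 3 * a := by nlinarith
    have htri : ‖B μ - 2 * μ‖ ≤ d + Eμ * Eν * ‖μ + ν μ‖
        + Eμ * d + Eν * d := by
      rw [hBexp]
      have h := tri4 (ν μ - μ) (f * g * (μ + ν μ)) (f * (μ - ν μ)) (g * (μ - ν μ))
      simp only [norm_mul, hμν, ← hd_def, ← hEμ_def, ← hEν_def] at h
      exact h
    have hane : a ≠ 0 := ha0.ne'
    have hmne : m ≠ 0 := hm.ne'
    clear_value c m A f g a d Eμ Eν E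
    have hfinal : ‖B μ - 2 * μ‖ ≤ A / a := by
      calc ‖B μ - 2 * μ‖ ≤ d + Eμ * Eν * ‖μ + ν μ‖ + Eμ * d + Eν * d :=
            htri
        _ ≤ c / a + 1 * (4 / (m ^ 2 * a ^ 2)) * (3 * a) + 1 * (c / a) + 1 * (c / a) := by
          have hEν1 : Eν ≤ 1 := le_trans hEνE hE1
          have hS0 : 0 ≤ ‖μ + ν μ‖ := norm_nonneg _
          have hca : 0 ≤ c / a := div_nonneg hc.le ha0.le
          have t2 : Eμ * Eν * ‖μ + ν μ‖ ≤ 1 * (4 / (m ^ 2 * a ^ 2)) * (3 * a) := by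
            apply mul_le_mul _ hsum hS0 (by positivity)
            exact mul_le_mul hEμ1 (le_trans hEνE hEbound) hEν0 zero_le_one
          have t3 : Eμ * d ≤ 1 * (c / a) := mul_le_mul hEμ1 hd' hd0 zero_le_one
          have t4 : Eν * d ≤ 1 * (c / a) := mul_le_mul hEν1 hd' hd0 zero_le_one
          exact add_le_add (add_le_add (add_le_add hd' t2) t3) t4
        _ = A / a := by
          rw [hA_def]
          field_simp
          ring
    have hlt : A / a < ε := by
      rw [div_lt_iff₀ ha0]
      have h1 : ε * (A / ε + 1) = A + ε := by field_simp
      have h2 : ε * (A / ε + 1) ≤ ε * a := mul_le_mul_of_nonneg_left ha1 hε.le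
      linarith
    exact lt_of_le_of_lt hfinal hlt
  refine ⟨main, ?_⟩
  intro M
  obtain ⟨R0, hR0⟩ := main 1 one_pos
  refine ⟨max R0 ((M + 1) / 2), ?_⟩
  intro μ hre him hR
  have h1 : ‖B μ - 2 * μ‖ < 1 := hR0 μ hre him (le_trans (le_max_left _ _) hR)
  have h2 : (M + 1) / 2 ≤ ‖μ‖ := le_trans (le_max_right _ _) hR
  have h3 : ‖2 * μ‖ - ‖B μ‖ ≤ ‖B μ - 2 * μ‖ := by
    have h := norm_sub_norm_le (2 * μ : ℂ) (B μ)
    rwa [norm_sub_rev] at h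
  have h4 : ‖2 * μ‖ = 2 * ‖μ‖ := by
    rw [norm_mul, Complex.norm_two]
  linarith
end

section
/- Let 0 < k1 < k2, M2 > 0 and σ̄2 > 0. There exist a constant δ ∈ (0,1) and a constant C > 0 such that for every ξ ∈ ℂ with 0 ≤ Re ξ ≤ δ·k1 and 0 ≤ Im ξ ≤ δ·k1, one has A(ξ) ≠ 0 and |μ₁(ξ) + μ₂(ξ)| ≤ C·|A(ξ)|. -/
set_option maxHeartbeats 1000000

lemma mu_props (k1 k δ : ℝ) (ξ w : ℂ) (hk1 : 0 < k1) (hk : k1 ≤ k)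
    (hδ0 : 0 ≤ δ) (hδ : δ ≤ 1/2)
    (h : IsPrincipalSqrt ((k:ℂ)^2 - ξ^2) w)
    (ha0 : 0 ≤ ξ.re) (ha : ξ.re ≤ δ*k1) (hb0 : 0 ≤ ξ.im) (hb : ξ.im ≤ δ*k1) :
    k1/2 ≤ w.re ∧ w.im ≤ 0 ∧ -w.im ≤ 2*δ^2*k1 ∧ ‖w‖ ≤ k + k1 := by
  obtain ⟨hsq, hpos⟩ := h
  have hre : w.re^2 - w.im^2 = k^2 - (ξ.re^2 - ξ.im^2) := by
    have := congrArg Complex.re hsq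
    simpa [pow_two, Complex.mul_re] using this
  have him : 2*w.re*w.im = -(2*ξ.re*ξ.im) := by
    have := congrArg Complex.im hsq
    simp [pow_two, Complex.mul_im] at this
    linarith
  have ha2 : ξ.re^2 ≤ δ^2*k1^2 := by
    have := mul_le_mul ha ha ha0 (by nlinarith)
    nlinarith
  have hb2 : ξ.im^2 ≤ δ^2*k1^2 := by
    have := mul_le_mul hb hb hb0 (by nlinarith)
    nlinarith
  have hδ2 : δ^2 ≤ 1/4 := by nlinarith
  have hzre : (3/4)*k1^2 ≤ k^2 - (ξ.re^2 - ξ.im^2) := by nlinarith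
  have hwrepos : 0 < w.re := by
    rcases hpos with h | ⟨h0, _⟩
    · exact h
    · exfalso; rw [h0] at hre; nlinarith
  have hwre : k1/2 ≤ w.re := by nlinarith
  have hwim : w.im ≤ 0 := by nlinarith [mul_nonneg ha0 hb0]
  have hwim2 : -w.im ≤ 2*δ^2*k1 := by
    have hab : ξ.re * ξ.im ≤ δ^2*k1^2 := by
      nlinarith [mul_le_mul ha hb hb0 (by positivity : (0:ℝ) ≤ δ*k1)]
    have hprod : (-w.im) * (w.re - k1/2) ≥ 0 := mul_nonneg (by linarith) (by linarith)
    nlinarith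
  refine ⟨hwre, hwim, hwim2, ?_⟩
  have habs : (‖w‖)^2 = ‖(k:ℂ)^2 - ξ^2‖ := by
    rw [← hsq, norm_pow]
  have h1 : ‖(k:ℂ)^2 - ξ^2‖ ≤ k^2 + (‖ξ‖)^2 := by
    have tri := norm_sub_le ((k:ℂ)^2) (ξ^2)
    simp only [norm_pow, Complex.norm_real, Real.norm_eq_abs, sq_abs] at tri
    exact tri
  have h2 : (‖ξ‖)^2 ≤ k1^2 := by
    rw [Complex.sq_norm, Complex.normSq_apply]; nlinarith
  nlinarith [norm_nonneg w, norm_nonneg ξ]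

lemma eps_abs (M2 σ2 : ℝ) (w : ℂ) :
    ‖Complex.exp (2 * Complex.I * w * ((M2 : ℂ) + Complex.I * (σ2 : ℂ)))‖
      = Real.exp (-(2*w.re*σ2) - 2*w.im*M2) := by
  rw [Complex.norm_exp]
  congr 1
  simp [Complex.mul_re, Complex.mul_im]
  ring

lemma key_id (e₁ e₂ w₁ w₂ : ℂ) :
    (starRingEnd ℂ) (1+e₁) * (starRingEnd ℂ) (1+e₂) *
        ((1 - e₁*e₂)*(w₁+w₂) + (e₁-e₂)*(w₁-w₂))
      = (Complex.normSq (1+e₁) : ℂ) * (w₁ * ((1-e₂)*(1+(starRingEnd ℂ) e₂)))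
        + (Complex.normSq (1+e₂) : ℂ) * (w₂ * ((1-e₁)*(1+(starRingEnd ℂ) e₁))) := by
  rw [← Complex.mul_conj, ← Complex.mul_conj]
  simp only [map_add, map_one]
  ring

lemma T_re (e : ℂ) : ((1-e)*(1+(starRingEnd ℂ) e)).re = 1 - (‖e‖)^2 := by
  rw [Complex.sq_norm]
  simp [Complex.mul_re, Complex.normSq_apply]
  ring

lemma T_im (e : ℂ) : ((1-e)*(1+(starRingEnd ℂ) e)).im = -(2*e.im) := by
  simp [Complex.mul_im]
  ring

lemma bracket_bound (k1 δ r x y s t : ℝ) (hk1 : 0 < k1) (hx : k1/2 ≤ x) (hy : y ≤ 0)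
    (hy' : -y ≤ 2*δ^2*k1) (hs0 : 0 ≤ s) (hs : s ≤ r) (ht : |t| ≤ s) (hr1 : r < 1)
    (hδ2 : 16*δ^2 ≤ 1-r^2) :
    k1/4*(1-r^2) ≤ x*(1-s^2) + y*(2*t) := by
  have hs1 : s < 1 := lt_of_le_of_lt hs hr1
  have hr0' : 0 ≤ r := le_trans hs0 hs
  have hss : s^2 ≤ r^2 := by nlinarith
  have h1 : (k1/2)*(1-r^2) ≤ x*(1-s^2) := by
    nlinarith [mul_nonneg (by linarith : (0:ℝ) ≤ x - k1/2) (by nlinarith : (0:ℝ) ≤ 1 - s^2)]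
  have ht1 : |t| ≤ 1 := by linarith
  have h2 : -(4*δ^2*k1) ≤ y*(2*t) := by
    have habs := abs_le.1 ht1
    have hyn : 0 ≤ -y := by linarith
    have := mul_le_mul hy' ht1 (abs_nonneg t) (by nlinarith)
    nlinarith [mul_le_mul_of_nonneg_left (le_abs_self t) hyn,
      mul_le_mul_of_nonneg_left (neg_abs_le t) hyn]
  have h3 : 16*δ^2*k1 ≤ (1-r^2)*k1 := mul_le_mul_of_nonneg_right hδ2 hk1.le
  nlinarith

lemma one_add_bounds (e : ℂ) (r : ℝ) (he : ‖e‖ ≤ r) (hr1 : r < 1) :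
    (1-r)^2 ≤ Complex.normSq (1+e) ∧ ‖1+e‖ ≤ 2 := by
  have h1 : ‖1+e‖ ≤ 1 + r := by
    calc ‖1+e‖ ≤ ‖1‖ + ‖e‖ := norm_add_le _ _
    _ ≤ 1 + r := by rw [norm_one]; linarith
  have h2 : 1 - r ≤ ‖1+e‖ := by
    have h3 : (1:ℝ) ≤ ‖1+e‖ + ‖e‖ := by
      have := norm_add_le (1+e) (-e)
      simpa using this
    linarith
  constructor
  · rw [← Complex.sq_norm]
    exact pow_le_pow_left₀ (by linarith) h2 2
  · linarith

theorem stmt_11 (k1 k2 M2 σ2 : ℝ) (hk1 : 0 < k1) (hk12 : k1 < k2) (hM2 : 0 < M2) (hσ2 : 0 < σ2)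
    (μ₁ μ₂ ε₁ ε₂ A : ℂ → ℂ)
    (hμ₁ : ∀ ξ : ℂ, IsPrincipalSqrt ((k1 : ℂ) ^ 2 - ξ ^ 2) (μ₁ ξ))
    (hμ₂ : ∀ ξ : ℂ, IsPrincipalSqrt ((k2 : ℂ) ^ 2 - ξ ^ 2) (μ₂ ξ))
    (hε₁ : ∀ ξ : ℂ, ε₁ ξ = Complex.exp (2 * Complex.I * μ₁ ξ * ((M2 : ℂ) + Complex.I * (σ2 : ℂ))))
    (hε₂ : ∀ ξ : ℂ, ε₂ ξ = Complex.exp (2 * Complex.I * μ₂ ξ * ((M2 : ℂ) + Complex.I * (σ2 : ℂ))))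
    (hA : ∀ ξ : ℂ, A ξ =
      (1 - ε₁ ξ * ε₂ ξ) * (μ₁ ξ + μ₂ ξ) + (ε₁ ξ - ε₂ ξ) * (μ₁ ξ - μ₂ ξ)) :
    ∃ δ : ℝ, δ ∈ Set.Ioo (0 : ℝ) 1 ∧ ∃ C : ℝ, 0 < C ∧
      ∀ ξ : ℂ, 0 ≤ ξ.re → ξ.re ≤ δ * k1 → 0 ≤ ξ.im → ξ.im ≤ δ * k1 →
        A ξ ≠ 0 ∧ ‖μ₁ ξ + μ₂ ξ‖ ≤ C * ‖A ξ‖ := by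
  set r : ℝ := Real.exp (-(k1*σ2/2)) with hrdef
  have hr0 : 0 < r := Real.exp_pos _
  have hr1 : r < 1 := by
    rw [hrdef]
    apply Real.exp_lt_one_iff.2
    nlinarith
  have hrsq : 0 < 1 - r^2 := by nlinarith
  set δ : ℝ := min (1/2) (min (Real.sqrt (σ2/(8*M2))) (Real.sqrt ((1-r^2)/16))) with hδdef
  have hδ0 : 0 < δ := by
    apply lt_min (by norm_num)
    exact lt_min (Real.sqrt_pos.2 (by positivity)) (Real.sqrt_pos.2 (by positivity))
  have hδhalf : δ ≤ 1/2 := min_le_left _ _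
  have hδσ : δ^2 * (8*M2) ≤ σ2 := by
    have h1 : δ ≤ Real.sqrt (σ2/(8*M2)) := le_trans (min_le_right _ _) (min_le_left _ _)
    have h2 : δ^2 ≤ σ2/(8*M2) := by
      calc δ^2 ≤ (Real.sqrt (σ2/(8*M2)))^2 := by nlinarith [Real.sqrt_nonneg (σ2/(8*M2))]
      _ = σ2/(8*M2) := Real.sq_sqrt (by positivity)
    rw [← le_div_iff₀ (by positivity)]
    exact h2
  have hδr : 16*δ^2 ≤ 1-r^2 := by
    have h1 : δ ≤ Real.sqrt ((1-r^2)/16) := le_trans (min_le_right _ _) (min_le_right _ _)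
    have h2 : δ^2 ≤ (1-r^2)/16 := by
      calc δ^2 ≤ (Real.sqrt ((1-r^2)/16))^2 := by nlinarith [Real.sqrt_nonneg ((1-r^2)/16)]
      _ = (1-r^2)/16 := Real.sq_sqrt (by positivity)
    linarith
  set m : ℝ := k1/2 * ((1-r)^2 * (1-r^2)) with hmdef
  have hm : 0 < m := by
    have : 0 < 1 - r := by linarith
    positivity
  refine ⟨δ, ⟨hδ0, by linarith⟩, 8*(k1+k2)/m, div_pos (by linarith) hm, ?_⟩
  intro ξ ha0 ha hb0 hb
  obtain ⟨hx1, hy1, hy1', habs1⟩ :=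
    mu_props k1 k1 δ ξ (μ₁ ξ) hk1 le_rfl hδ0.le hδhalf (hμ₁ ξ) ha0 ha hb0 hb
  obtain ⟨hx2, hy2, hy2', habs2⟩ :=
    mu_props k1 k2 δ ξ (μ₂ ξ) hk1 hk12.le hδ0.le hδhalf (hμ₂ ξ) ha0 ha hb0 hb
  -- bounds on |ε_j|
  have heps : ∀ (e w : ℂ), (e = Complex.exp (2 * Complex.I * w *
      ((M2 : ℂ) + Complex.I * (σ2 : ℂ)))) → k1/2 ≤ w.re → -w.im ≤ 2*δ^2*k1 →
      ‖e‖ ≤ r := by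
    intro e w he hwx hwy
    rw [he, eps_abs, hrdef]
    apply Real.exp_le_exp.2
    nlinarith [mul_le_mul_of_nonneg_right hwx hσ2.le,
      mul_le_mul_of_nonneg_right hwy hM2.le,
      mul_le_mul_of_nonneg_right hδσ hk1.le]
  have he1 : ‖ε₁ ξ‖ ≤ r := heps _ _ (hε₁ ξ) hx1 hy1'
  have he2 : ‖ε₂ ξ‖ ≤ r := heps _ _ (hε₂ ξ) hx2 hy2'
  have hkey := key_id (ε₁ ξ) (ε₂ ξ) (μ₁ ξ) (μ₂ ξ)
  rw [← hA ξ] at hkey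
  have hPre : ((starRingEnd ℂ) (1 + ε₁ ξ) * (starRingEnd ℂ) (1 + ε₂ ξ) * A ξ).re
      = Complex.normSq (1+ε₁ ξ) *
          ((μ₁ ξ).re * (1 - (‖ε₂ ξ‖)^2) - (μ₁ ξ).im * (-(2*(ε₂ ξ).im)))
      + Complex.normSq (1+ε₂ ξ) *
          ((μ₂ ξ).re * (1 - (‖ε₁ ξ‖)^2) - (μ₂ ξ).im * (-(2*(ε₁ ξ).im))) := by
    rw [hkey, Complex.add_re, Complex.re_ofReal_mul, Complex.re_ofReal_mul,
      Complex.mul_re (μ₁ ξ), Complex.mul_re (μ₂ ξ), T_re, T_im, T_re, T_im]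
  obtain ⟨hn1, hu1⟩ := one_add_bounds (ε₁ ξ) r he1 hr1
  obtain ⟨hn2, hu2⟩ := one_add_bounds (ε₂ ξ) r he2 hr1
  have hB1 : k1/4*(1-r^2) ≤ (μ₁ ξ).re * (1 - (‖ε₂ ξ‖)^2)
      - (μ₁ ξ).im * (-(2*(ε₂ ξ).im)) := by
    have h := bracket_bound k1 δ r (μ₁ ξ).re (μ₁ ξ).im (‖ε₂ ξ‖) ((ε₂ ξ).im)
      hk1 hx1 hy1 hy1' (norm_nonneg _) he2 (Complex.abs_im_le_norm _) hr1 hδr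
    nlinarith [h]
  have hB2 : k1/4*(1-r^2) ≤ (μ₂ ξ).re * (1 - (‖ε₁ ξ‖)^2)
      - (μ₂ ξ).im * (-(2*(ε₁ ξ).im)) := by
    have h := bracket_bound k1 δ r (μ₂ ξ).re (μ₂ ξ).im (‖ε₁ ξ‖) ((ε₁ ξ).im)
      hk1 hx2 hy2 hy2' (norm_nonneg _) he1 (Complex.abs_im_le_norm _) hr1 hδr
    nlinarith [h]
  have hq : 0 < k1/4*(1-r^2) := by positivity
  have hRe : m ≤ ((starRingEnd ℂ) (1 + ε₁ ξ) * (starRingEnd ℂ) (1 + ε₂ ξ) * A ξ).re := by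
    rw [hPre]
    have p1 : (1-r)^2 * (k1/4*(1-r^2)) ≤ Complex.normSq (1+ε₁ ξ) *
        ((μ₁ ξ).re * (1 - (‖ε₂ ξ‖)^2) - (μ₁ ξ).im * (-(2*(ε₂ ξ).im))) :=
      mul_le_mul hn1 hB1 hq.le (Complex.normSq_nonneg _)
    have p2 : (1-r)^2 * (k1/4*(1-r^2)) ≤ Complex.normSq (1+ε₂ ξ) *
        ((μ₂ ξ).re * (1 - (‖ε₁ ξ‖)^2) - (μ₂ ξ).im * (-(2*(ε₁ ξ).im))) :=
      mul_le_mul hn2 hB2 hq.le (Complex.normSq_nonneg _)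
    rw [hmdef]; nlinarith [p1, p2]
  have hAne : A ξ ≠ 0 := by
    intro h0
    rw [h0, mul_zero] at hRe
    simp only [Complex.zero_re] at hRe
    linarith
  have habsP : ((starRingEnd ℂ) (1 + ε₁ ξ) * (starRingEnd ℂ) (1 + ε₂ ξ) * A ξ).re
      ≤ ‖1+ε₁ ξ‖ * ‖1+ε₂ ξ‖ * ‖A ξ‖ := by
    have h := Complex.re_le_norm ((starRingEnd ℂ) (1 + ε₁ ξ) * (starRingEnd ℂ) (1 + ε₂ ξ) * A ξ)
    rwa [norm_mul, norm_mul, Complex.norm_conj, Complex.norm_conj] at h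
  have hA4 : m/4 ≤ ‖A ξ‖ := by
    nlinarith [norm_nonneg (A ξ), norm_nonneg (1+ε₁ ξ), norm_nonneg (1+ε₂ ξ),
      mul_le_mul hu1 hu2 (norm_nonneg _) (by norm_num : (0:ℝ) ≤ 2),
      mul_le_mul_of_nonneg_right (mul_le_mul hu1 hu2 (norm_nonneg _) (by norm_num : (0:ℝ) ≤ 2)) (norm_nonneg (A ξ))]
  refine ⟨hAne, ?_⟩
  have hsum : ‖μ₁ ξ + μ₂ ξ‖ ≤ 2*(k1+k2) := by
    have := norm_add_le (μ₁ ξ) (μ₂ ξ)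
    linarith
  have hCm : 8*(k1+k2)/m * (m/4) = 2*(k1+k2) := by
    field_simp
    ring
  calc ‖μ₁ ξ + μ₂ ξ‖ ≤ 2*(k1+k2) := hsum
  _ = 8*(k1+k2)/m * (m/4) := hCm.symm
  _ ≤ 8*(k1+k2)/m * ‖A ξ‖ := by
    exact mul_le_mul_of_nonneg_left hA4 (div_pos (by linarith) hm).le
end

section
/- Let M1, σ̄1, M2, σ̄2 > 0 and let n be a nonzero integer. Suppose a, b, w ∈ ℂ satisfy Re a ∈ [(2|n|−2)·M1, (2|n|+2)·M1], Im a ∈ [(2|n|−2)·σ̄1, (2|n|+2)·σ̄1], Re b ∈ [0, 2·M2], Im b ∈ [0, 2·σ̄2], w² = a² + b², and Im w ≥ 0. Then Im w ≥ (2|n|−2)²·σ̄1 / √((2|n|+2)² + 4·(M2/M1)²). -/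
/-- Let `M1, σ̄1, M2, σ̄2 > 0` and `n` a nonzero integer. If `a, b, w ∈ ℂ`
satisfy `Re a ∈ [(2|n|−2)M1, (2|n|+2)M1]`, `Im a ∈ [(2|n|−2)σ̄1, (2|n|+2)σ̄1]`,
`Re b ∈ [0, 2M2]`, `Im b ∈ [0, 2σ̄2]`, `w² = a² + b²` and `Im w ≥ 0`, then
`Im w ≥ (2|n|−2)² σ̄1 / √((2|n|+2)² + 4 (M2/M1)²)`. -/
theorem stmt_12 (M1 σ1 M2 σ2 : ℝ) (hM1 : 0 < M1) (hσ1 : 0 < σ1) (hM2 : 0 < M2) (hσ2 : 0 < σ2)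
    (n : ℤ) (hn : n ≠ 0) (a b w : ℂ)
    (ha1 : (2 * |(n : ℝ)| - 2) * M1 ≤ a.re) (ha2 : a.re ≤ (2 * |(n : ℝ)| + 2) * M1)
    (ha3 : (2 * |(n : ℝ)| - 2) * σ1 ≤ a.im) (ha4 : a.im ≤ (2 * |(n : ℝ)| + 2) * σ1)
    (hb1 : 0 ≤ b.re) (hb2 : b.re ≤ 2 * M2) (hb3 : 0 ≤ b.im) (hb4 : b.im ≤ 2 * σ2)
    (hw : w ^ 2 = a ^ 2 + b ^ 2) (hw' : 0 ≤ w.im) :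
    (2 * |(n : ℝ)| - 2) ^ 2 * σ1 / Real.sqrt ((2 * |(n : ℝ)| + 2) ^ 2 + 4 * (M2 / M1) ^ 2) ≤
      w.im := by
  have hN : (1 : ℝ) ≤ |(n : ℝ)| := by
    have := Int.one_le_abs hn
    have h2 : ((1 : ℤ) : ℝ) ≤ ((|n| : ℤ) : ℝ) := by exact_mod_cast this
    simpa using h2
  set N : ℝ := |(n : ℝ)| with hNdef
  set s : ℝ := 2 * N - 2 with hsdef
  set t : ℝ := 2 * N + 2 with htdef
  have hs0 : 0 ≤ s := by simp only [hsdef]; linarith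
  have ht0 : 0 < t := by simp only [htdef]; linarith
  -- imaginary part equation
  have hwim : w.re * w.im = a.re * a.im + b.re * b.im := by
    have h := congrArg Complex.im hw
    simp only [pow_two, Complex.mul_im, Complex.add_im] at h
    linarith
  -- real part equation
  have hwre : w.re * w.re - w.im * w.im = (a.re * a.re - a.im * a.im)
      + (b.re * b.re - b.im * b.im) := by
    have h := congrArg Complex.re hw
    simp only [pow_two, Complex.mul_re, Complex.add_re] at h
    linarith
  -- triangle inequality on moduli
  have habs : w.re * w.re + w.im * w.im ≤ (a.re * a.re + a.im * a.im)
      + (b.re * b.re + b.im * b.im) := by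
    have h1 : ‖w ^ 2‖ ≤ ‖a ^ 2‖ + ‖b ^ 2‖ := by
      rw [hw]; exact norm_add_le _ _
    have e : ∀ z : ℂ, ‖z ^ 2‖ = z.re * z.re + z.im * z.im := by
      intro z
      rw [norm_pow, Complex.sq_norm, Complex.normSq_apply]
    rw [e, e, e] at h1
    exact h1
  have hwre_sq : w.re * w.re ≤ t ^ 2 * M1 ^ 2 + 4 * M2 ^ 2 := by
    have hare : a.re ≤ t * M1 := ha2
    have hare0 : 0 ≤ a.re := le_trans (by positivity) ha1
    nlinarith [habs, hwre, mul_le_mul hare hare hare0 (by positivity : (0:ℝ) ≤ t * M1),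
      mul_le_mul hb2 hb2 hb1 (by positivity : (0:ℝ) ≤ 2 * M2)]
  rcases eq_or_lt_of_le hs0 with h0 | hs
  · rw [← h0]
    simpa using hw'
  · -- product lower bound
    have hprod : s ^ 2 * M1 * σ1 ≤ w.re * w.im := by
      rw [hwim]
      nlinarith [mul_nonneg hb1 hb3,
        mul_nonneg (sub_nonneg.2 ha1) (sub_nonneg.2 ha3),
        mul_pos hs hM1, mul_pos hs hσ1, ha1, ha3]
    have hspos : 0 < s ^ 2 * M1 * σ1 := by positivity
    have hwrepos : 0 < w.re := by
      by_contra h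
      push_neg at h
      have : w.re * w.im ≤ 0 := mul_nonpos_of_nonpos_of_nonneg h hw'
      linarith
    have hsqrtpos : 0 < Real.sqrt (t ^ 2 + 4 * (M2 / M1) ^ 2) := Real.sqrt_pos.2 (by positivity)
    have hkey : Real.sqrt (t ^ 2 + 4 * (M2 / M1) ^ 2) * M1
        = Real.sqrt (t ^ 2 * M1 ^ 2 + 4 * M2 ^ 2) := by
      rw [← Real.sqrt_sq hM1.le, ← Real.sqrt_mul (by positivity)]
      congr 1
      field_simp
      rw [Real.sq_sqrt (by positivity)]
    have hwre_le : w.re ≤ Real.sqrt (t ^ 2 * M1 ^ 2 + 4 * M2 ^ 2) := by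
      apply Real.le_sqrt_of_sq_le
      rw [sq]
      exact hwre_sq
    have h1 : s ^ 2 * M1 * σ1 ≤ w.im * Real.sqrt (t ^ 2 * M1 ^ 2 + 4 * M2 ^ 2) := by
      calc s ^ 2 * M1 * σ1 ≤ w.re * w.im := hprod
        _ = w.im * w.re := by ring
        _ ≤ w.im * Real.sqrt (t ^ 2 * M1 ^ 2 + 4 * M2 ^ 2) :=
            mul_le_mul_of_nonneg_left hwre_le hw'
    rw [div_le_iff₀ hsqrtpos, ← mul_le_mul_iff_of_pos_right hM1]
    calc s ^ 2 * σ1 * M1 = s ^ 2 * M1 * σ1 := by ring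
      _ ≤ w.im * Real.sqrt (t ^ 2 * M1 ^ 2 + 4 * M2 ^ 2) := h1
      _ = w.im * (Real.sqrt (t ^ 2 + 4 * (M2 / M1) ^ 2) * M1) := by rw [hkey]
      _ = w.im * Real.sqrt (t ^ 2 + 4 * (M2 / M1) ^ 2) * M1 := by ring
end

section
/- Let 0 < k1 < k2, M2 > 0, σ̄2 > 0, M̃2 = M2 + i·σ̄2, and let δ0 be a real with 0 < δ0 ≤ (√2/4)·k1·σ̄2. Let ξ = ξ1 + i·ξ2 with 0 ≤ ξ1 ≤ (√2/2)·k1 and 0 ≤ ξ2 ≤ δ0/M2, and let j ∈ {1,2}. Then for every real x2 with 0 ≤ x2 ≤ M2: Im(μ_j(ξ)·(M̃2 − x2)) ≥ max{(√2/2)·k1·σ̄2 − δ0, δ0} and Im(μ_j(ξ)·x2) ≥ −δ0. -/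
lemma aux_sqrt (k ξ1 ξ2 : ℝ) (hk : 0 < k) (hξ1 : 0 ≤ ξ1)
    (hξ1' : ξ1 ≤ Real.sqrt 2 / 2 * k) (hξ2 : 0 ≤ ξ2) (μ : ℂ)
    (hμ : IsPrincipalSqrt ((k : ℂ) ^ 2 - ((ξ1 : ℂ) + Complex.I * (ξ2 : ℂ)) ^ 2) μ) :
    Real.sqrt 2 / 2 * k ≤ μ.re ∧ -ξ2 ≤ μ.im ∧ μ.im ≤ 0 := by
  obtain ⟨hsq, hpr⟩ := hμ
  set a := μ.re
  set b := μ.im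
  have hs : Real.sqrt 2 ^ 2 = 2 := Real.sq_sqrt (by norm_num)
  have hs0 : (0:ℝ) < Real.sqrt 2 := by positivity
  have hre := congrArg Complex.re hsq
  have him := congrArg Complex.im hsq
  simp [pow_two, Complex.mul_re, Complex.mul_im, Complex.add_re, Complex.add_im,
    Complex.sub_re, Complex.sub_im, Complex.I_re, Complex.I_im, Complex.ofReal_re,
    Complex.ofReal_im] at hre him
  have ha : 0 < a := by
    rcases hpr with h | ⟨h0, _⟩
    · exact h
    · exfalso; nlinarith [sq_nonneg b, sq_nonneg ξ2]
  have hb : b ≤ 0 := by nlinarith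
  have haa : Real.sqrt 2 / 2 * k ≤ a := by
    nlinarith [sq_nonneg b, sq_nonneg (a - Real.sqrt 2 / 2 * k)]
  refine ⟨haa, ?_, hb⟩
  nlinarith [mul_le_mul_of_nonneg_right (hξ1'.trans haa) hξ2]

/-- Let `0 < k1 < k2`, `M2 > 0`, `σ̄2 > 0`, `M̃2 = M2 + i σ̄2`, and
`0 < δ0 ≤ (√2/4) k1 σ̄2`. If `ξ = ξ1 + i ξ2` with `0 ≤ ξ1 ≤ (√2/2) k1` and `0 ≤ ξ2 ≤ δ0/M2`,
then for `j = 1, 2` and every `x2 ∈ [0, M2]`: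
`Im(μ_j(ξ)(M̃2 − x2)) ≥ max((√2/2) k1 σ̄2 − δ0, δ0)` and `Im(μ_j(ξ) x2) ≥ −δ0`. -/
theorem stmt_14 (k1 k2 M2 σ2 δ0 : ℝ) (hk1 : 0 < k1) (hk12 : k1 < k2) (hM2 : 0 < M2)
    (hσ2 : 0 < σ2) (hδ0 : 0 < δ0) (hδ0' : δ0 ≤ Real.sqrt 2 / 4 * k1 * σ2)
    (μ₁ μ₂ : ℂ → ℂ)
    (hμ₁ : ∀ ξ : ℂ, IsPrincipalSqrt ((k1 : ℂ) ^ 2 - ξ ^ 2) (μ₁ ξ))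
    (hμ₂ : ∀ ξ : ℂ, IsPrincipalSqrt ((k2 : ℂ) ^ 2 - ξ ^ 2) (μ₂ ξ))
    (ξ1 ξ2 : ℝ) (hξ1 : 0 ≤ ξ1) (hξ1' : ξ1 ≤ Real.sqrt 2 / 2 * k1)
    (hξ2 : 0 ≤ ξ2) (hξ2' : ξ2 ≤ δ0 / M2) :
    ∀ x2 : ℝ, 0 ≤ x2 → x2 ≤ M2 →
      ∀ μ ∈ ({μ₁ ((ξ1 : ℂ) + Complex.I * (ξ2 : ℂ)),
              μ₂ ((ξ1 : ℂ) + Complex.I * (ξ2 : ℂ))} : Set ℂ),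
        max (Real.sqrt 2 / 2 * k1 * σ2 - δ0) δ0 ≤
          (μ * (((M2 : ℂ) + Complex.I * (σ2 : ℂ)) - (x2 : ℂ))).im ∧
        -δ0 ≤ (μ * (x2 : ℂ)).im := by
  intro x2 hx2 hx2' μ hμ
  have hs0 : (0:ℝ) < Real.sqrt 2 := by positivity
  have hξ2M : ξ2 * M2 ≤ δ0 := by
    rw [← le_div_iff₀ hM2] at *; exact hξ2'
  have key : Real.sqrt 2 / 2 * k1 ≤ μ.re ∧ -ξ2 ≤ μ.im ∧ μ.im ≤ 0 := by
    rcases hμ with rfl | rfl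
    · exact aux_sqrt k1 ξ1 ξ2 hk1 hξ1 hξ1' hξ2 _ (hμ₁ _)
    · have h := aux_sqrt k2 ξ1 ξ2 (hk1.trans hk12) hξ1
        (hξ1'.trans (by nlinarith)) hξ2 _ (hμ₂ _)
      exact ⟨le_trans (by nlinarith) h.1, h.2⟩
  obtain ⟨ha, hb1, hb2⟩ := key
  have him1 : (μ * (((M2 : ℂ) + Complex.I * (σ2 : ℂ)) - (x2 : ℂ))).im
      = μ.re * σ2 + μ.im * (M2 - x2) := by
    simp [Complex.mul_im, Complex.sub_re, Complex.sub_im, Complex.add_re, Complex.add_im,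
      Complex.I_re, Complex.I_im, Complex.ofReal_re, Complex.ofReal_im]
  have him2 : (μ * (x2 : ℂ)).im = μ.im * x2 := by
    simp [Complex.mul_im, Complex.ofReal_re, Complex.ofReal_im]
  rw [him1, him2]
  refine ⟨max_le ?_ ?_, ?_⟩
  · nlinarith
  · nlinarith
  · nlinarith
end

section
/- Fix κ > 1 and c0 > 0. There exist δ0 > 0 and C > 0, depending only on κ and c0, with the following property: for all k1 > 0, with k2 = κ·k1, all σ̄2 ≥ c0/k1 and all M2 ≥ c0/k1, and every ξ = ξ1 + i·ξ2 ∈ ℂ with 0 ≤ ξ1 ≤ (√2/2)·k1 and 0 ≤ ξ2 ≤ δ0/M2, one has A(ξ) ≠ 0 and |μ₁(ξ) + μ₂(ξ)| ≤ C·|A(ξ)|. -/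
lemma mu_bounds_aux (k k1 : ℝ) (hk1 : 0 < k1) (hk : k1 ≤ k) (ξ μ : ℂ)
    (h : IsPrincipalSqrt ((k : ℂ) ^ 2 - ξ ^ 2) μ)
    (h1 : 0 ≤ ξ.re) (h2 : ξ.re ≤ Real.sqrt 2 / 2 * k1) (h3 : 0 ≤ ξ.im) :
    k1 / 2 ≤ μ.re ∧ -ξ.im ≤ μ.im ∧ μ.im ≤ 0 := by
  obtain ⟨hsq, hpr⟩ := h
  have hre := congrArg Complex.re hsq
  have him := congrArg Complex.im hsq
  simp [pow_two, Complex.mul_re, Complex.mul_im, Complex.sub_re, Complex.sub_im,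
    Complex.ofReal_re, Complex.ofReal_im] at hre him
  have hs2 : Real.sqrt 2 ^ 2 = 2 := Real.sq_sqrt (by norm_num)
  have hsn : 0 ≤ Real.sqrt 2 := Real.sqrt_nonneg 2
  have hξ1sq : ξ.re ^ 2 ≤ k1 ^ 2 / 2 := by nlinarith
  have hupos : 0 < μ.re := by
    rcases hpr with h | ⟨h0, hv⟩
    · exact h
    · exfalso; rw [h0] at hre; nlinarith
  have hu : k1 / 2 ≤ μ.re := by nlinarith
  have hule : ξ.re ≤ μ.re := by nlinarith
  have hv0 : μ.im ≤ 0 := by nlinarith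
  refine ⟨hu, ?_, hv0⟩
  nlinarith [mul_nonneg h3 (sub_nonneg.mpr hule)]

lemma sq_coord_bound (e : ℂ) (ρ : ℝ) (h : ‖e‖ ≤ ρ) :
    e.re ^ 2 + e.im ^ 2 ≤ ρ ^ 2 := by
  have h1 := Complex.sq_norm e
  have h2 := Complex.normSq_apply e
  nlinarith [norm_nonneg e]

lemma exp_re_bound_aux (c0 k1 σ2 ρ u vM : ℝ) (hc0 : 0 < c0) (hk1 : 0 < k1)
    (hσ2 : c0 / k1 ≤ σ2) (hu : k1 / 2 ≤ u) (hvM : -(c0 * (1 - ρ) / 8) ≤ vM)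
    (hρ0 : 0 ≤ ρ) (hρ1 : ρ ≤ 1) :
    -2 * (u * σ2 + vM) ≤ -(c0 / 2) := by
  have hσ2pos : 0 < σ2 := lt_of_lt_of_le (div_pos hc0 hk1) hσ2
  have hc : c0 ≤ σ2 * k1 := (div_le_iff₀ hk1).mp hσ2
  have h1 : k1 / 2 * σ2 ≤ u * σ2 := mul_le_mul_of_nonneg_right hu hσ2pos.le
  nlinarith [mul_nonneg hρ0 hc0.le]

set_option maxHeartbeats 1000000 in
lemma core_lb_aux (ρ k1 u1 u2 v1 v2 a1 b1 a2 b2 : ℝ) (hρ0 : 0 ≤ ρ) (hρ1 : ρ < 1)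
    (hk1 : 0 < k1) (hu1 : k1 / 2 ≤ u1) (hu2 : k1 / 2 ≤ u2)
    (hv1r : v1 ≤ 0) (hv2r : v2 ≤ 0)
    (hv1l : -((1 - ρ) * k1 / 8) ≤ v1) (hv2l : -((1 - ρ) * k1 / 8) ≤ v2)
    (hc1 : a1 ^ 2 + b1 ^ 2 ≤ ρ ^ 2) (hc2 : a2 ^ 2 + b2 ^ 2 ≤ ρ ^ 2) :
    (1 - ρ) ^ 3 * (u1 + u2) / 2
      ≤ ((1 + a1) ^ 2 + b1 ^ 2) * (u1 * (1 - a2 ^ 2 - b2 ^ 2) + 2 * v1 * b2)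
        + ((1 + a2) ^ 2 + b2 ^ 2) * (u2 * (1 - a1 ^ 2 - b1 ^ 2) + 2 * v2 * b1) := by
  have hρsq : ρ ^ 2 ≤ 1 := by nlinarith
  have hb2sq : b2 ^ 2 ≤ 1 := by nlinarith
  have hb1sq : b1 ^ 2 ≤ 1 := by nlinarith
  have hvb1 : -((1 - ρ) * k1 / 8) ≤ v1 * b2 := by
    nlinarith [mul_nonneg (neg_nonneg.mpr hv1r) (by nlinarith : (0:ℝ) ≤ 1 - b2),
      mul_nonneg (neg_nonneg.mpr hv1r) (by nlinarith : (0:ℝ) ≤ 1 + b2)]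
  have hvb2 : -((1 - ρ) * k1 / 8) ≤ v2 * b1 := by
    nlinarith [mul_nonneg (neg_nonneg.mpr hv2r) (by nlinarith : (0:ℝ) ≤ 1 - b1),
      mul_nonneg (neg_nonneg.mpr hv2r) (by nlinarith : (0:ℝ) ≤ 1 + b1)]
  have hu1n : (0:ℝ) ≤ u1 := by linarith
  have hu2n : (0:ℝ) ≤ u2 := by linarith
  have h1ρ : (0:ℝ) ≤ 1 - ρ := by linarith
  have ht1 : (1 - ρ) * u1 / 2 ≤ u1 * (1 - a2 ^ 2 - b2 ^ 2) + 2 * v1 * b2 := by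
    nlinarith [mul_le_mul_of_nonneg_left hc2 hu1n,
      mul_nonneg hu1n (mul_nonneg hρ0 h1ρ),
      mul_le_mul_of_nonneg_left (show k1 ≤ 2 * u1 by linarith) h1ρ]
  have ht2 : (1 - ρ) * u2 / 2 ≤ u2 * (1 - a1 ^ 2 - b1 ^ 2) + 2 * v2 * b1 := by
    nlinarith [mul_le_mul_of_nonneg_left hc1 hu2n,
      mul_nonneg hu2n (mul_nonneg hρ0 h1ρ),
      mul_le_mul_of_nonneg_left (show k1 ≤ 2 * u2 by linarith) h1ρ]
  have hw1 : (1 - ρ) ^ 2 ≤ (1 + a1) ^ 2 + b1 ^ 2 := by nlinarith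
  have hw2 : (1 - ρ) ^ 2 ≤ (1 + a2) ^ 2 + b2 ^ 2 := by nlinarith
  have e1 : (1 - ρ) ^ 2 * ((1 - ρ) * u1 / 2)
      ≤ ((1 + a1) ^ 2 + b1 ^ 2) * (u1 * (1 - a2 ^ 2 - b2 ^ 2) + 2 * v1 * b2) :=
    mul_le_mul hw1 ht1 (by positivity) (by nlinarith)
  have e2 : (1 - ρ) ^ 2 * ((1 - ρ) * u2 / 2)
      ≤ ((1 + a2) ^ 2 + b2 ^ 2) * (u2 * (1 - a1 ^ 2 - b1 ^ 2) + 2 * v2 * b1) :=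
    mul_le_mul hw2 ht2 (by positivity) (by nlinarith)
  nlinarith

lemma im_prod_bound_aux (c0 k1 M2 t δ : ℝ) (hc0 : 0 < c0) (hk1 : 0 < k1)
    (hM2 : c0 / k1 ≤ M2) (ht0 : 0 ≤ t) (ht : t ≤ δ / M2) (hδ : 0 ≤ δ) :
    t * M2 ≤ δ ∧ t ≤ δ * k1 / c0 := by
  have hM2pos : 0 < M2 := lt_of_lt_of_le (div_pos hc0 hk1) hM2
  constructor
  · have := mul_le_mul_of_nonneg_right ht hM2pos.le
    rwa [div_mul_cancel₀ _ hM2pos.ne'] at this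
  · have h1 : δ / M2 ≤ δ / (c0 / k1) :=
      div_le_div_of_nonneg_left hδ (div_pos hc0 hk1) hM2
    have h2 : δ / (c0 / k1) = δ * k1 / c0 := by
      rw [div_div_eq_mul_div]
    linarith

/-- Fix `κ > 1`, `c0 > 0`. There are `δ0 > 0` and `C > 0`, depending only
on `κ, c0`, such that for all `k1 > 0` (with `k2 = κ k1`), all `σ̄2 ≥ c0/k1`, `M2 ≥ c0/k1`,
and every `ξ = ξ1 + i ξ2` with `0 ≤ ξ1 ≤ (√2/2) k1` and `0 ≤ ξ2 ≤ δ0/M2`, one has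
`A(ξ) ≠ 0` and `|μ₁(ξ) + μ₂(ξ)| ≤ C |A(ξ)|`. -/
theorem stmt_15 (κ c0 : ℝ) (hκ : 1 < κ) (hc0 : 0 < c0) :
    ∃ δ0 : ℝ, 0 < δ0 ∧ ∃ C : ℝ, 0 < C ∧
      ∀ k1 σ2 M2 : ℝ, 0 < k1 → c0 / k1 ≤ σ2 → c0 / k1 ≤ M2 →
      ∀ μ₁ μ₂ ε₁ ε₂ A : ℂ → ℂ,
        (∀ ξ : ℂ, IsPrincipalSqrt ((k1 : ℂ) ^ 2 - ξ ^ 2) (μ₁ ξ)) →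
        (∀ ξ : ℂ, IsPrincipalSqrt (((κ * k1 : ℝ) : ℂ) ^ 2 - ξ ^ 2) (μ₂ ξ)) →
        (∀ ξ : ℂ, ε₁ ξ =
          Complex.exp (2 * Complex.I * μ₁ ξ * ((M2 : ℂ) + Complex.I * (σ2 : ℂ)))) →
        (∀ ξ : ℂ, ε₂ ξ =
          Complex.exp (2 * Complex.I * μ₂ ξ * ((M2 : ℂ) + Complex.I * (σ2 : ℂ)))) →
        (∀ ξ : ℂ, A ξ =
          (1 - ε₁ ξ * ε₂ ξ) * (μ₁ ξ + μ₂ ξ) + (ε₁ ξ - ε₂ ξ) * (μ₁ ξ - μ₂ ξ)) →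
        ∀ ξ : ℂ, 0 ≤ ξ.re → ξ.re ≤ Real.sqrt 2 / 2 * k1 → 0 ≤ ξ.im → ξ.im ≤ δ0 / M2 →
          A ξ ≠ 0 ∧ ‖μ₁ ξ + μ₂ ξ‖ ≤ C * ‖A ξ‖ := by
  have hρpos : 0 < Real.exp (-(c0 / 2)) := Real.exp_pos _
  have hρlt : Real.exp (-(c0 / 2)) < 1 := Real.exp_lt_one_iff.mpr (by linarith)
  set ρ : ℝ := Real.exp (-(c0 / 2)) with hρdef
  have h1ρ : 0 < 1 - ρ := by linarith
  refine ⟨c0 * (1 - ρ) / 8, by positivity, 16 / (1 - ρ) ^ 3, by positivity, ?_⟩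
  intro k1 σ2 M2 hk1 hσ2 hM2 μ₁ μ₂ ε₁ ε₂ A hμ1 hμ2 hε1 hε2 hA ξ hre0 hre1 him0 him1
  have hM2pos : 0 < M2 := lt_of_lt_of_le (div_pos hc0 hk1) hM2
  obtain ⟨hu1, hv1l, hv1r⟩ := mu_bounds_aux k1 k1 hk1 le_rfl ξ (μ₁ ξ) (hμ1 ξ) hre0 hre1 him0
  obtain ⟨hu2, hv2l, hv2r⟩ := mu_bounds_aux (κ * k1) k1 hk1 (by nlinarith) ξ (μ₂ ξ) (hμ2 ξ)
    hre0 hre1 him0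
  obtain ⟨himM, himk⟩ := im_prod_bound_aux c0 k1 M2 ξ.im (c0 * (1 - ρ) / 8) hc0 hk1 hM2
    him0 him1 (by positivity)
  have himk' : ξ.im ≤ (1 - ρ) * k1 / 8 := by
    have : c0 * (1 - ρ) / 8 * k1 / c0 = (1 - ρ) * k1 / 8 := by
      field_simp
    linarith [himk, this.symm.le]
  -- |ε_j| ≤ ρ
  have hcore : ∀ μ : ℂ, k1 / 2 ≤ μ.re → -ξ.im ≤ μ.im →
      ‖Complex.exp (2 * Complex.I * μ * ((M2 : ℂ) + Complex.I * (σ2 : ℂ)))‖ ≤ ρ := by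
    intro μ hu hvl
    rw [Complex.norm_exp, hρdef, Real.exp_le_exp]
    have hrecalc : (2 * Complex.I * μ * ((M2 : ℂ) + Complex.I * (σ2 : ℂ))).re
        = -2 * (μ.re * σ2 + μ.im * M2) := by
      simp [Complex.mul_re, Complex.mul_im]; ring
    rw [hrecalc]
    have hvM : -(c0 * (1 - ρ) / 8) ≤ μ.im * M2 := by
      have h1 : -ξ.im * M2 ≤ μ.im * M2 := mul_le_mul_of_nonneg_right hvl hM2pos.le
      have h2 : -ξ.im * M2 = -(ξ.im * M2) := by ring
      linarith
    exact exp_re_bound_aux c0 k1 σ2 ρ μ.re (μ.im * M2) hc0 hk1 hσ2 hu hvM hρpos.le hρlt.le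
  have he1 : ‖ε₁ ξ‖ ≤ ρ := by rw [hε1]; exact hcore _ hu1 hv1l
  have he2 : ‖ε₂ ξ‖ ≤ ρ := by rw [hε2]; exact hcore _ hu2 hv2l
  have hc1 := sq_coord_bound (ε₁ ξ) ρ he1
  have hc2 := sq_coord_bound (ε₂ ξ) ρ he2
  -- the auxiliary quantity B
  have hkey : A ξ = μ₁ ξ * (1 + ε₁ ξ) * (1 - ε₂ ξ) + μ₂ ξ * (1 - ε₁ ξ) * (1 + ε₂ ξ) := by
    rw [hA ξ]; ring
  have hBre : (A ξ * (starRingEnd ℂ) (1 + ε₁ ξ) * (starRingEnd ℂ) (1 + ε₂ ξ)).re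
      = ((1 + (ε₁ ξ).re) ^ 2 + (ε₁ ξ).im ^ 2)
          * ((μ₁ ξ).re * (1 - (ε₂ ξ).re ^ 2 - (ε₂ ξ).im ^ 2) + 2 * (μ₁ ξ).im * (ε₂ ξ).im)
        + ((1 + (ε₂ ξ).re) ^ 2 + (ε₂ ξ).im ^ 2)
          * ((μ₂ ξ).re * (1 - (ε₁ ξ).re ^ 2 - (ε₁ ξ).im ^ 2) + 2 * (μ₂ ξ).im * (ε₁ ξ).im) := by
    rw [hkey]
    simp [Complex.mul_re, Complex.mul_im, Complex.add_re, Complex.add_im, Complex.sub_re,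
      Complex.sub_im, Complex.one_re, Complex.one_im, Complex.conj_re, Complex.conj_im]
    ring
  have hv1l' : -((1 - ρ) * k1 / 8) ≤ (μ₁ ξ).im := by linarith
  have hv2l' : -((1 - ρ) * k1 / 8) ≤ (μ₂ ξ).im := by linarith
  have hBlb : (1 - ρ) ^ 3 * ((μ₁ ξ).re + (μ₂ ξ).re) / 2
      ≤ (A ξ * (starRingEnd ℂ) (1 + ε₁ ξ) * (starRingEnd ℂ) (1 + ε₂ ξ)).re := by
    rw [hBre]
    exact core_lb_aux ρ k1 _ _ _ _ _ _ _ _ hρpos.le hρlt hk1 hu1 hu2 hv1r hv2r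
      hv1l' hv2l' hc1 hc2
  have hBpos : 0 < (1 - ρ) ^ 3 * ((μ₁ ξ).re + (μ₂ ξ).re) / 2 := by
    have h1 : 0 < (μ₁ ξ).re + (μ₂ ξ).re := by linarith
    positivity
  have hAne : A ξ ≠ 0 := by
    intro h0
    rw [h0] at hBlb
    simp at hBlb
    linarith
  refine ⟨hAne, ?_⟩
  -- |B| ≤ 4 |A ξ|
  have hle1 : ‖1 + ε₁ ξ‖ ≤ 2 := by
    calc ‖1 + ε₁ ξ‖ ≤ ‖(1:ℂ)‖ + ‖ε₁ ξ‖ := norm_add_le _ _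
    _ ≤ 2 := by rw [norm_one]; linarith
  have hle2 : ‖1 + ε₂ ξ‖ ≤ 2 := by
    calc ‖1 + ε₂ ξ‖ ≤ ‖(1:ℂ)‖ + ‖ε₂ ξ‖ := norm_add_le _ _
    _ ≤ 2 := by rw [norm_one]; linarith
  have habsB : ‖A ξ * (starRingEnd ℂ) (1 + ε₁ ξ) * (starRingEnd ℂ) (1 + ε₂ ξ)‖
      ≤ 4 * ‖A ξ‖ := by
    rw [norm_mul, norm_mul, Complex.norm_conj, Complex.norm_conj]
    have s1 : ‖A ξ‖ * ‖1 + ε₁ ξ‖ ≤ ‖A ξ‖ * 2 :=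
      mul_le_mul_of_nonneg_left hle1 (norm_nonneg _)
    have s2 : ‖A ξ‖ * ‖1 + ε₁ ξ‖ * ‖1 + ε₂ ξ‖
        ≤ ‖A ξ‖ * 2 * 2 :=
      mul_le_mul s1 hle2 (norm_nonneg _) (by positivity)
    linarith
  have hBab := Complex.re_le_norm (A ξ * (starRingEnd ℂ) (1 + ε₁ ξ) * (starRingEnd ℂ) (1 + ε₂ ξ))
  have hAlb : (1 - ρ) ^ 3 * ((μ₁ ξ).re + (μ₂ ξ).re) / 8 ≤ ‖A ξ‖ := by linarith
  -- |μ₁ + μ₂| ≤ 2 (u1 + u2)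
  have hk18 : (1 - ρ) * k1 ≤ 1 * k1 := mul_le_mul_of_nonneg_right (by linarith) hk1.le
  have hμsum : ‖μ₁ ξ + μ₂ ξ‖ ≤ 2 * ((μ₁ ξ).re + (μ₂ ξ).re) := by
    have h0 := Complex.norm_le_abs_re_add_abs_im (μ₁ ξ + μ₂ ξ)
    rw [Complex.add_re, Complex.add_im] at h0
    have hre' : |(μ₁ ξ).re + (μ₂ ξ).re| = (μ₁ ξ).re + (μ₂ ξ).re :=
      abs_of_nonneg (by linarith)
    have him' : |(μ₁ ξ).im + (μ₂ ξ).im| ≤ k1 / 4 :=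
      abs_le.mpr ⟨by linarith, by linarith⟩
    rw [hre'] at h0
    linarith
  have h8 : (0:ℝ) < (1 - ρ) ^ 3 := by positivity
  calc ‖μ₁ ξ + μ₂ ξ‖ ≤ 2 * ((μ₁ ξ).re + (μ₂ ξ).re) := hμsum
  _ = 16 / (1 - ρ) ^ 3 * ((1 - ρ) ^ 3 * ((μ₁ ξ).re + (μ₂ ξ).re) / 8) := by
      field_simp; ring
  _ ≤ 16 / (1 - ρ) ^ 3 * ‖A ξ‖ :=
      mul_le_mul_of_nonneg_left hAlb (by positivity)
end
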